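/- arXiv:1512.06655 — 3 statements merged into one kernel-verified Lean document; each statement's English description precedes it below -/
import Mathlib

section
/- For all natural numbers r and n with 3 ≤ r ≤ n, log p(n,r) ≤ (1/(n−r+1)) · C(n,r) · log( e·(n−r+1) ). -/
open Matroid Set Filter Real

namespace PavingEnum

/-- The rank of a matroid: the largest cardinality of a base. -/
noncomputable def mrk {α : Type*} (M : Matroid α) : ℕ :=
  sSup {n : ℕ | ∃ B, M.IsBase B ∧ B.ncard = n}

/-- The rank of a set in a matroid: the largest cardinality of an
independent subset of the set. -/
noncomputable def mrnk {α : Type*} (M : Matroid α) (X : Set α) : ℕ :=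
  sSup {n : ℕ | ∃ I, I ⊆ X ∧ M.Indep I ∧ I.ncard = n}

/-- A circuit is a minimal dependent set. -/
def IsCircuit {α : Type*} (M : Matroid α) (C : Set α) : Prop :=
  M.Dep C ∧ ∀ D, D ⊂ C → M.Indep D

/-- A matroid of rank `r` is paving if every circuit has cardinality at least `r`. -/
def Paving {α : Type*} (M : Matroid α) : Prop :=
  ∀ C, IsCircuit M C → (mrk M : ℕ∞) ≤ C.encard

/-- A matroid is sparse paving if both it and its dual are paving. -/
def SparsePaving {α : Type*} (M : Matroid α) : Prop :=
  Paving M ∧ Paving M✶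

/-- `numMatroids n r` : the number of matroids on the ground set `{1, …, n}` of rank `r`. -/
noncomputable def numMatroids (n r : ℕ) : ℕ :=
  {M : Matroid (Fin n) | M.E = Set.univ ∧ mrk M = r}.ncard

/-- `numPaving n r` : the number of paving matroids on `{1, …, n}` of rank `r`. -/
noncomputable def numPaving (n r : ℕ) : ℕ :=
  {M : Matroid (Fin n) | M.E = Set.univ ∧ mrk M = r ∧ Paving M}.ncard

/-- `numSparsePaving n r` : the number of sparse paving matroids on `{1, …, n}` of rank `r`. -/
noncomputable def numSparsePaving (n r : ℕ) : ℕ :=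
  {M : Matroid (Fin n) | M.E = Set.univ ∧ mrk M = r ∧ SparsePaving M}.ncard

end PavingEnum

open PavingEnum

namespace PavingProof


variable {n r : ℕ} {M : Matroid (Fin n)}

lemma base_ncard (hE : M.E = Set.univ) (hrk : mrk M = r) {B : Set (Fin n)}
    (hB : M.IsBase B) : B.ncard = r := by
  have hset : {k : ℕ | ∃ B', M.IsBase B' ∧ B'.ncard = k} = {B.ncard} := by
    ext k
    simp only [Set.mem_setOf_eq, Set.mem_singleton_iff]
    constructor
    · rintro ⟨B', hB', rfl⟩
      exact (hB'.ncard_eq_ncard_of_isBase hB)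
    · rintro rfl; exact ⟨B, hB, rfl⟩
  rw [← hrk]
  simp [mrk, hset]

lemma indep_ncard_le (hE : M.E = Set.univ) (hrk : mrk M = r) {I : Set (Fin n)}
    (hI : M.Indep I) : I.ncard ≤ r := by
  obtain ⟨B, hB, hIB⟩ := hI.exists_isBase_superset
  have := base_ncard hE hrk hB
  calc I.ncard ≤ B.ncard := Set.ncard_le_ncard hIB (Set.toFinite B)
    _ = r := this

lemma indep_of_small (hE : M.E = Set.univ) (hrk : mrk M = r) (hpav : Paving M)
    {S : Set (Fin n)} (hS : S.ncard < r) : M.Indep S := by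
  by_contra hdep
  have hSdep : M.Dep S := ⟨hdep, by rw [hE]; exact Set.subset_univ S⟩
  -- find a minimal-cardinality dependent subset of S
  set P := {k : ℕ | ∃ D, D ⊆ S ∧ M.Dep D ∧ D.ncard = k} with hP
  have hPne : P.Nonempty := ⟨S.ncard, S, le_refl _, hSdep, rfl⟩
  obtain ⟨D, hDS, hDdep, hDcard⟩ := Nat.sInf_mem hPne
  have hcirc : PavingEnum.IsCircuit M D := by
    refine ⟨hDdep, fun D' hD' => ?_⟩
    by_contra hD'i
    have hD'dep : M.Dep D' := ⟨hD'i, by rw [hE]; exact Set.subset_univ D'⟩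
    have hlt : D'.ncard < D.ncard := Set.ncard_lt_ncard hD' (Set.toFinite D)
    have : sInf P ≤ D'.ncard := Nat.sInf_le ⟨D', hD'.subset.trans hDS, hD'dep, rfl⟩
    omega
  have := hpav D hcirc
  rw [hrk] at this
  rw [← (Set.toFinite D).cast_ncard_eq] at this
  have hcard : D.ncard ≤ S.ncard := Set.ncard_le_ncard hDS (Set.toFinite S)
  have : r ≤ D.ncard := by exact_mod_cast this
  omega

lemma ncard_le_of_indep_subset_closure {S I : Set (Fin n)} (hS : M.Indep S)
    (hI : M.Indep I) (hIc : I ⊆ M.closure S) : I.ncard ≤ S.ncard := by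
  obtain ⟨J, hJ, hIJ⟩ := hI.subset_isBasis_of_subset hIc (M.closure_subset_ground S)
  have h1 : I.encard ≤ J.encard := Set.encard_mono hIJ
  have h2 : J.encard = S.encard := hJ.encard_eq_encard hS.isBasis_closure
  have : I.encard ≤ S.encard := h1.trans_eq h2
  rw [← (Set.toFinite I).cast_ncard_eq, ← (Set.toFinite S).cast_ncard_eq] at this
  exact_mod_cast this

lemma dep_of_subset_closure (hE : M.E = Set.univ) {S D : Set (Fin n)}
    (hSi : M.Indep S) (hS : S.ncard = r - 1) (hr : 1 ≤ r)
    (hD : D ⊆ M.closure S) (hDcard : D.ncard = r) : M.Dep D := by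
  rw [Matroid.dep_iff]
  refine ⟨fun hi => ?_, by rw [hE]; exact Set.subset_univ D⟩
  have := ncard_le_of_indep_subset_closure hSi hi hD
  omega

/-- A dependent `r`-set is contained in the closure of any of its `(r-1)`-subsets. -/
lemma subset_closure_of_dep_r (hE : M.E = Set.univ) (hrk : mrk M = r) (hpav : Paving M)
    (hr : 1 ≤ r) {A S : Set (Fin n)} (hA : M.Dep A) (hAcard : A.ncard = r)
    (hSA : S ⊆ A) (hS : S.ncard = r - 1) : A ⊆ M.closure S := by
  have hSi : M.Indep S := indep_of_small hE hrk hpav (by omega)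
  have hsub : S ⊆ M.closure S := M.subset_closure S (by rw [hE]; exact Set.subset_univ S)
  -- A \ S is a singleton
  have hfin : A.Finite := Set.toFinite A
  have hdiff : (A \ S).ncard = 1 := by
    rw [Set.ncard_diff hSA]; omega
  obtain ⟨a, ha⟩ := Set.ncard_eq_one.mp hdiff
  have haA : a ∈ A := by
    have : a ∈ A \ S := by rw [ha]; rfl
    exact this.1
  have hAeq : A = insert a S := by
    refine (Set.eq_of_subset_of_ncard_le ?_ ?_ hfin).symm
    · exact Set.insert_subset haA hSA
    · calc A.ncard = r := hAcard
        _ ≤ (insert a S).ncard := by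
            rw [Set.ncard_insert_of_notMem _ (Set.toFinite S)]
            · omega
            · have : a ∈ A \ S := by rw [ha]; rfl
              exact this.2
  have haS : a ∉ S := by
    have : a ∈ A \ S := by rw [ha]; rfl
    exact this.2
  have hacl : a ∈ M.closure S := by
    rw [hSi.mem_closure_iff]
    left
    rwa [← hAeq]
  rw [hAeq]
  exact Set.insert_subset hacl hsub

/-- closure of a dependent r-set equals closure of any of its (r-1)-subsets. -/
lemma closure_eq_closure_sub (hE : M.E = Set.univ) (hrk : mrk M = r) (hpav : Paving M)
    (hr : 1 ≤ r) {A S : Set (Fin n)} (hA : M.Dep A) (hAcard : A.ncard = r)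
    (hSA : S ⊆ A) (hS : S.ncard = r - 1) : M.closure S = M.closure A := by
  have h1 : A ⊆ M.closure S := subset_closure_of_dep_r hE hrk hpav hr hA hAcard hSA hS
  apply subset_antisymm (M.closure_mono hSA)
  calc M.closure A ⊆ M.closure (M.closure S) := M.closure_mono h1
    _ = M.closure S := M.closure_closure S

lemma dep_of_subset_closure_dep (hE : M.E = Set.univ) (hrk : mrk M = r) (hpav : Paving M)
    (hr : 1 ≤ r) {A D : Set (Fin n)} (hA : M.Dep A) (hAcard : A.ncard = r)
    (hD : D ⊆ M.closure A) (hDcard : D.ncard = r) : M.Dep D := by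
  obtain ⟨S, hSA, hS⟩ := Set.exists_subset_card_eq (show r - 1 ≤ A.ncard by omega)
  have hSi : M.Indep S := indep_of_small hE hrk hpav (by omega)
  have hcl := closure_eq_closure_sub hE hrk hpav hr hA hAcard hSA hS
  exact dep_of_subset_closure hE hSi hS hr (hcl ▸ hD) hDcard

/-- the closure of a dependent r-set equals the closure of any (r-1)-subset of that closure. -/
lemma closure_eq_of_r1_subset (hE : M.E = Set.univ) (hrk : mrk M = r) (hpav : Paving M)
    (hr : 1 ≤ r) {A S : Set (Fin n)} (hA : M.Dep A) (hAcard : A.ncard = r)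
    (hS : S ⊆ M.closure A) (hScard : S.ncard = r - 1) : M.closure S = M.closure A := by
  have hSi : M.Indep S := indep_of_small hE hrk hpav (by omega)
  apply subset_antisymm
  · calc M.closure S ⊆ M.closure (M.closure A) := M.closure_mono hS
      _ = M.closure A := M.closure_closure A
  · -- closure A ⊆ closure S
    have hsub : ∀ x ∈ M.closure A, x ∈ M.closure S := by
      intro x hx
      by_cases hxS : x ∈ S
      · exact M.subset_closure S (by rw [hE]; exact Set.subset_univ S) hxS
      · have hins : insert x S ⊆ M.closure A := Set.insert_subset hx hS
        have hinsc : (insert x S).ncard = r := by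
          rw [Set.ncard_insert_of_notMem hxS (Set.toFinite S)]; omega
        have hdep := dep_of_subset_closure_dep hE hrk hpav hr hA hAcard hins hinsc
        rw [hSi.mem_closure_iff]
        exact Or.inl hdep
    have h2 : M.closure A ⊆ M.closure (M.closure S) := by
      intro x hx
      exact M.subset_closure (M.closure S) (M.closure_subset_ground S) (hsub x hx)
    calc M.closure A ⊆ M.closure (M.closure S) := h2
      _ = M.closure S := M.closure_closure S

lemma dep_of_union_dep (hE : M.E = Set.univ) (hrk : mrk M = r) (hpav : Paving M)
    (hr : 1 ≤ r) {B C D : Set (Fin n)} (hB : M.Dep B) (hBcard : B.ncard = r)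
    (hC : M.Dep C) (hCcard : C.ncard = r) (hint : (B ∩ C).ncard = r - 1)
    (hD : D ⊆ B ∪ C) (hDcard : D.ncard = r) : M.Dep D := by
  have hSi : M.Indep (B ∩ C) := indep_of_small hE hrk hpav (by omega)
  have h1 : B ⊆ M.closure (B ∩ C) :=
    subset_closure_of_dep_r hE hrk hpav hr hB hBcard Set.inter_subset_left hint
  have h2 : C ⊆ M.closure (B ∩ C) :=
    subset_closure_of_dep_r hE hrk hpav hr hC hCcard Set.inter_subset_right hint
  exact dep_of_subset_closure hE hSi hint hr
    (Set.union_subset h1 h2 |>.trans (le_refl _) |> fun h => hD.trans h) hDcard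



variable {α : Type*} [DecidableEq α]

/-- the `j`-th window of length `r` in the list `l`. -/
def window (l : List α) (r j : ℕ) : Finset α := ((l.drop j).take r).toFinset

/-- all windows of length `r` of the enumeration of `F`. -/
noncomputable def windows (r : ℕ) (F : Finset α) : Finset (Finset α) :=
  ((List.range (F.card + 1 - r)).map (fun j => window F.toList r j)).toFinset

lemma slice_nodup (l : List α) (hl : l.Nodup) (r j : ℕ) : ((l.drop j).take r).Nodup :=
  (((l.drop j).take_sublist r).trans (l.drop_sublist j)).nodup hl

lemma slice_length (l : List α) {r j : ℕ} (h : j + r ≤ l.length) :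
    ((l.drop j).take r).length = r := by
  rw [List.length_take, List.length_drop]; omega

lemma window_card (l : List α) (hl : l.Nodup) {r j : ℕ} (h : j + r ≤ l.length) :
    (window l r j).card = r := by
  rw [window, List.toFinset_card_of_nodup (slice_nodup l hl r j), slice_length l h]

lemma window_subset (l : List α) (r j : ℕ) : window l r j ⊆ l.toFinset := by
  intro x hx
  rw [window, List.mem_toFinset] at hx
  exact List.mem_toFinset.2 ((((l.drop j).take_sublist r).trans (l.drop_sublist j)).mem hx)

lemma mem_window_iff {l : List α} {r j : ℕ} {x : α} (h : j + r ≤ l.length) :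
    x ∈ window l r j ↔ ∃ k, ∃ (hk : k < r), l[j + k]'(by omega) = x := by
  rw [window, List.mem_toFinset, List.mem_iff_getElem]
  constructor
  · rintro ⟨k, hk, rfl⟩
    have hk' : k < r := by
      have := slice_length l h; omega
    refine ⟨k, hk', ?_⟩
    rw [List.getElem_take, List.getElem_drop]
  · rintro ⟨k, hk, rfl⟩
    have hlen : k < ((l.drop j).take r).length := by rw [slice_length l h]; exact hk
    refine ⟨k, hlen, ?_⟩
    rw [List.getElem_take, List.getElem_drop]

lemma window_mem_windows {F : Finset α} {r j : ℕ} (hj : j < F.card + 1 - r) :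
    window F.toList r j ∈ windows r F := by
  rw [windows, List.mem_toFinset, List.mem_map]
  exact ⟨j, List.mem_range.2 hj, rfl⟩

lemma mem_windows_iff {F : Finset α} {r : ℕ} {B : Finset α} :
    B ∈ windows r F ↔ ∃ j < F.card + 1 - r, B = window F.toList r j := by
  rw [windows, List.mem_toFinset, List.mem_map]
  simp only [List.mem_range]
  exact ⟨fun ⟨j, h1, h2⟩ => ⟨j, h1, h2.symm⟩, fun ⟨j, h1, h2⟩ => ⟨j, h1, h2.symm⟩⟩

lemma windows_card_le (r : ℕ) (F : Finset α) : (windows r F).card ≤ F.card + 1 - r := by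
  calc (windows r F).card ≤ ((List.range (F.card + 1 - r)).map
        (fun j => window F.toList r j)).length := List.toFinset_card_le _
    _ = F.card + 1 - r := by rw [List.length_map, List.length_range]

lemma windows_cover {F : Finset α} {r : ℕ} (hr : 1 ≤ r) (hrF : r ≤ F.card) {x : α}
    (hx : x ∈ F) : ∃ B ∈ windows r F, x ∈ B := by
  set l := F.toList with hl
  have hlen : l.length = F.card := F.length_toList
  have hxl : x ∈ l := by rw [hl, Finset.mem_toList]; exact hx
  obtain ⟨i, hi, rfl⟩ := List.mem_iff_getElem.1 hxl
  set j := min i (F.card - r) with hj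
  have hjr : j + r ≤ l.length := by omega
  refine ⟨window l r j, window_mem_windows (by omega), ?_⟩
  rw [mem_window_iff hjr]
  refine ⟨i - j, by omega, ?_⟩
  congr 1
  omega

/-- prefix of length `r + j` of the enumeration of a finset, as a finset. -/
def pref (l : List α) (r j : ℕ) : Finset α := (l.take (r + j)).toFinset

lemma pref_zero (l : List α) (r : ℕ) : pref l r 0 = window l r 0 := by
  rw [pref, window, List.drop_zero, Nat.add_zero]

lemma pref_card (l : List α) (hl : l.Nodup) {r j : ℕ} (h : r + j ≤ l.length) :
    (pref l r j).card = r + j := by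
  rw [pref, List.toFinset_card_of_nodup ((l.take_sublist _).nodup hl), List.length_take]
  omega

lemma pref_subset (l : List α) (r j : ℕ) : pref l r j ⊆ l.toFinset := by
  intro x hx
  rw [pref, List.mem_toFinset] at hx
  exact List.mem_toFinset.2 ((l.take_sublist _).mem hx)

lemma mem_pref_iff {l : List α} {r j : ℕ} {x : α} :
    x ∈ pref l r j ↔ ∃ k, ∃ (hk : k < r + j) (hk2 : k < l.length), l[k] = x := by
  rw [pref, List.mem_toFinset, List.mem_iff_getElem]
  constructor
  · rintro ⟨k, hk, rfl⟩
    rw [List.length_take] at hk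
    refine ⟨k, by omega, by omega, ?_⟩
    rw [List.getElem_take]
  · rintro ⟨k, hk, hk2, rfl⟩
    refine ⟨k, by rw [List.length_take]; omega, ?_⟩
    rw [List.getElem_take]

lemma pref_succ (l : List α) {r j : ℕ} (h : r + j < l.length) :
    pref l r (j + 1) = insert (l[r + j]) (pref l r j) := by
  have : r + (j + 1) = (r + j) + 1 := by omega
  rw [pref, this, List.take_succ, List.getElem?_eq_getElem h]
  ext x
  simp only [List.toFinset_append, Finset.mem_union, List.mem_toFinset, Option.toList_some,
    List.mem_singleton, Finset.mem_insert, pref]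
  tauto

lemma getElem_not_mem_pref {l : List α} (hl : l.Nodup) {r j : ℕ} (h : r + j < l.length) :
    l[r + j] ∉ pref l r j := by
  intro hmem
  obtain ⟨k, hk, hk2, hkx⟩ := mem_pref_iff.1 hmem
  rw [hl.getElem_inj_iff] at hkx
  omega

/-- the "new" part of window `j+1` : its first `r - 1` elements, all within `pref l r j`. -/
def newS (l : List α) (r j : ℕ) : Finset α := ((l.drop (j + 1)).take (r - 1)).toFinset

lemma newS_card (l : List α) (hl : l.Nodup) {r j : ℕ} (hr : 1 ≤ r)
    (h : j + 1 + r ≤ l.length) : (newS l r j).card = r - 1 := by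
  rw [newS, List.toFinset_card_of_nodup (slice_nodup l hl _ _), List.length_take,
    List.length_drop]
  omega

lemma newS_subset_pref (l : List α) {r j : ℕ} (hr : 1 ≤ r) (h : j + 1 + r ≤ l.length) :
    newS l r j ⊆ pref l r j := by
  intro x hx
  rw [newS, List.mem_toFinset, List.mem_iff_getElem] at hx
  obtain ⟨k, hk, rfl⟩ := hx
  have hk' : k < r - 1 := by
    rw [List.length_take, List.length_drop] at hk; omega
  rw [List.getElem_take, List.getElem_drop]
  exact mem_pref_iff.2 ⟨j + 1 + k, by omega, by omega, rfl⟩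

lemma window_succ_eq (l : List α) {r j : ℕ} (hr : 1 ≤ r) (h : j + 1 + r ≤ l.length) :
    window l r (j + 1) = insert (l[j + r]'(by omega)) (newS l r j) := by
  have hlen : r - 1 < (l.drop (j + 1)).length := by rw [List.length_drop]; omega
  have hr' : List.take r (l.drop (j+1)) = List.take ((r-1)+1) (l.drop (j+1)) := by
    congr 1; omega
  rw [window, hr', List.take_succ, List.getElem?_eq_getElem hlen]
  have : (l.drop (j + 1))[r-1] = l[j + r]'(by omega) := by
    rw [List.getElem_drop]
    congr 1
    omega
  rw [this]
  ext x
  simp only [List.toFinset_append, Finset.mem_union, List.mem_toFinset, Option.toList_some,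
    List.mem_singleton, Finset.mem_insert, newS]
  tauto

lemma pref_last (F : Finset α) {r : ℕ} (hr : r ≤ F.card) :
    pref F.toList r (F.card - r) = F := by
  rw [pref]
  have : r + (F.card - r) = F.card := by omega
  rw [this, ← F.length_toList, List.take_length, Finset.toList_toFinset]

/-- sets of size `r` generated from `W` by repeatedly applying the paving exchange rule. -/
inductive Gen (r : ℕ) (W : Finset (Finset α)) : Finset α → Prop
  | base {A : Finset α} : A ∈ W → Gen r W A
  | rule {B C D : Finset α} : Gen r W B → Gen r W C → (B ∩ C).card = r - 1 →
      D ⊆ B ∪ C → D.card = r → Gen r W D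

/-- key exchange lemma: if all r-subsets of G are generated, S is an (r-1)-subset of G
with `insert x S` generated, then all r-subsets of `insert x G` are generated. -/
lemma gen_grow {r : ℕ} {W : Finset (Finset α)} {G : Finset α} (hr : 3 ≤ r)
    (hG : ∀ D ⊆ G, D.card = r → Gen r W D) {x : α} {S : Finset α}
    (hS : S ⊆ G) (hScard : S.card = r - 1) (hgen : Gen r W (insert x S)) :
    ∀ D ⊆ insert x G, D.card = r → Gen r W D := by
  by_cases hxG : x ∈ G
  · rw [Finset.insert_eq_self.2 hxG]; exact hG
  intro D hD hDcard
  by_cases hxD : x ∈ D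
  swap
  · exact hG D (fun y hy => (Finset.mem_insert.1 (hD hy)).resolve_left
      (fun h => hxD (h ▸ hy))) hDcard
  -- D = insert x S' with S' ⊆ G
  set S' := D.erase x with hS'
  have hS'G : S' ⊆ G := by
    intro y hy
    have hyD := Finset.mem_of_mem_erase hy
    have hyx := Finset.ne_of_mem_erase hy
    exact (Finset.mem_insert.1 (hD hyD)).resolve_left hyx
  have hS'card : S'.card = r - 1 := by
    rw [hS', Finset.card_erase_of_mem hxD, hDcard]
  have hDeq : D = insert x S' := by
    rw [hS', Finset.insert_erase hxD]
  rw [hDeq]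
  clear hDeq hD hDcard hS'
  -- induction on |S' \ S|
  have main : ∀ k (S : Finset α), S ⊆ G → S.card = r - 1 → Gen r W (insert x S) →
      (S' \ S).card = k → Gen r W (insert x S') := by
    intro k
    induction k with
    | zero =>
      intro S hSG hScard hgen hk
      have : S' = S := by
        apply Finset.eq_of_subset_of_card_le
        · intro y hy
          by_contra hyS
          have : y ∈ S' \ S := Finset.mem_sdiff.2 ⟨hy, hyS⟩
          rw [Finset.card_eq_zero.1 hk] at this
          exact absurd this (Finset.notMem_empty y)
        · omega
      rwa [this]
    | succ k ih =>
      intro S hSG hScard hgen hk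
      have hne : (S' \ S).Nonempty := by
        rw [← Finset.card_pos]; omega
      obtain ⟨y, hy⟩ := hne
      have hyS' : y ∈ S' := (Finset.mem_sdiff.1 hy).1
      have hyS : y ∉ S := (Finset.mem_sdiff.1 hy).2
      have hne2 : (S \ S').Nonempty := by
        rw [← Finset.card_pos]
        have h1 : (S \ S').card + (S ∩ S').card = S.card := by
          rw [Finset.card_sdiff_add_card_inter]
        have h2 : (S' \ S).card + (S' ∩ S).card = S'.card := by
          rw [Finset.card_sdiff_add_card_inter]
        rw [Finset.inter_comm] at h2
        omega
      obtain ⟨w, hw⟩ := hne2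
      have hwS : w ∈ S := (Finset.mem_sdiff.1 hw).1
      have hwS' : w ∉ S' := (Finset.mem_sdiff.1 hw).2
      have hxS : x ∉ S := fun h => hxG (hSG h)
      have hxS'' : x ∉ S' := fun h => hxG (hS'G h)
      have hxy : x ≠ y := fun h => hxG (hS'G (h ▸ hyS'))
      -- B = insert x S, C = insert y S
      have hCsub : insert y S ⊆ G := Finset.insert_subset (hS'G hyS') hSG
      have hCcard : (insert y S).card = r := by
        rw [Finset.card_insert_of_notMem hyS]; omega
      have hCgen : Gen r W (insert y S) := hG _ hCsub hCcard
      have hBC : (insert x S ∩ insert y S).card = r - 1 := by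
        have : insert x S ∩ insert y S = S := by
          ext z
          simp only [Finset.mem_inter, Finset.mem_insert]
          constructor
          · rintro ⟨hz1, hz2⟩
            rcases hz1 with rfl | hz1
            · rcases hz2 with hz2 | hz2
              · exact absurd hz2 hxy
              · exact absurd hz2 hxS
            · exact hz1
          · intro hz; exact ⟨Or.inr hz, Or.inr hz⟩
        rw [this]; exact hScard
      -- S₂ = insert y (S.erase w)
      set S₂ := insert y (S.erase w) with hS₂def
      have hS₂G : S₂ ⊆ G := Finset.insert_subset (hS'G hyS')
        ((Finset.erase_subset w S).trans hSG)
      have hS₂card : S₂.card = r - 1 := by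
        rw [hS₂def, Finset.card_insert_of_notMem
          (fun h => hyS (Finset.mem_of_mem_erase h)),
          Finset.card_erase_of_mem hwS]
        omega
      have hxS₂ : x ∉ S₂ := fun h => hxG (hS₂G h)
      have hgen₂ : Gen r W (insert x S₂) := by
        refine Gen.rule hgen hCgen hBC ?_ ?_
        · intro z hz
          rcases Finset.mem_insert.1 hz with hzx | hz
          · rw [hzx]; exact Finset.mem_union_left _ (Finset.mem_insert_self x S)
          · rcases Finset.mem_insert.1 hz with hzy | hz
            · rw [hzy]; exact Finset.mem_union_right _ (Finset.mem_insert_self y S)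
            · exact Finset.mem_union_left _
                (Finset.mem_insert_of_mem (Finset.mem_of_mem_erase hz))
        · rw [Finset.card_insert_of_notMem hxS₂]; omega
      refine ih S₂ hS₂G hS₂card hgen₂ ?_
      -- (S' \ S₂) = (S' \ S).erase y
      have heq : S' \ S₂ = (S' \ S).erase y := by
        ext z
        simp only [Finset.mem_sdiff, Finset.mem_erase, hS₂def, Finset.mem_insert, not_or,
          not_and]
        constructor
        · rintro ⟨hz1, hzy, hzE⟩
          refine ⟨hzy, hz1, fun hzS => ?_⟩
          rcases eq_or_ne z w with rfl | hzw
          · exact hwS' hz1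
          · exact hzE hzw hzS
        · rintro ⟨hzy, hz1, hz2⟩
          exact ⟨hz1, hzy, fun _ h => hz2 h⟩
      rw [heq, Finset.card_erase_of_mem hy, hk]
      omega
  exact main ((S' \ S).card) S hS hScard hgen rfl

/-- if all windows of `F` are in `W`, then every `r`-subset of `F` is generated. -/
lemma gen_of_windows_subset {r : ℕ} {W : Finset (Finset α)} {F : Finset α} (hr : 3 ≤ r)
    (hrF : r ≤ F.card) (hW : windows r F ⊆ W) :
    ∀ D ⊆ F, D.card = r → Gen r W D := by
  set l := F.toList with hldef
  have hl : l.Nodup := F.nodup_toList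
  have hlen : l.length = F.card := F.length_toList
  have key : ∀ j, j ≤ F.card - r → ∀ D ⊆ pref l r j, D.card = r → Gen r W D := by
    intro j
    induction j with
    | zero =>
      intro _ D hD hDcard
      rw [pref_zero] at hD
      have hwc : (window l r 0).card = r := window_card l hl (by omega)
      have : D = window l r 0 := Finset.eq_of_subset_of_card_le hD (by omega)
      rw [this]
      exact Gen.base (hW (window_mem_windows (by omega)))
    | succ j ih =>
      intro hj
      have hj' : j ≤ F.card - r := by omega
      have hjr : r + j < l.length := by omega
      have hjr2 : j + 1 + r ≤ l.length := by omega
      have hx : (l[j + r]'(by omega)) = (l[r + j]'(by omega)) := by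
        congr 1
        omega
      have hwin : window l r (j + 1) = insert (l[r + j]'(by omega)) (newS l r j) := by
        rw [window_succ_eq l (by omega) hjr2, hx]
      have hgenwin : Gen r W (insert (l[r + j]'(by omega)) (newS l r j)) := by
        rw [← hwin]
        exact Gen.base (hW (window_mem_windows (by omega)))
      have := gen_grow hr (ih hj') (newS_subset_pref l (by omega) hjr2)
        (newS_card l hl (by omega) hjr2) hgenwin
      rw [← pref_succ l hjr] at this
      exact this
  intro D hD hDcard
  have := key (F.card - r) (le_refl _) D ?_ hDcard
  · exact this
  · rw [pref_last F hrF]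
    exact hD



lemma numeric_choose {r h : ℕ} (hr : 3 ≤ r) (hrh : r ≤ h) :
    r * (h + 1 - r) ≤ h.choose (r - 1) := by
  induction h, hrh using Nat.le_induction with
  | base =>
    have h1 : r - (r - 1) = 1 := by omega
    have : r.choose (r - 1) = r.choose 1 := by
      rw [← Nat.choose_symm (by omega : r - 1 ≤ r), h1]
    rw [this, Nat.choose_one_right]
    have : r + 1 - r = 1 := by omega
    rw [this, Nat.mul_one]
  | succ h hrh ih =>
    have hsplit : (h + 1).choose (r - 1) = h.choose (r - 2) + h.choose (r - 1) := by
      have h2 : r - 1 = (r - 2) + 1 := by omega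
      rw [h2, Nat.choose_succ_succ]
    have hstep : r ≤ h.choose (r - 2) := by
      have h3 : r.choose (r - 2) ≤ h.choose (r - 2) := Nat.choose_le_choose _ hrh
      have h4 : r.choose (r - 2) = r.choose 2 := by
        rw [← Nat.choose_symm (by omega : r - 2 ≤ r)]
        congr 1
        omega
      have h5 : r.choose 2 = r * (r - 1) / 2 := Nat.choose_two_right r
      have h6 : r * 2 ≤ r * (r - 1) := Nat.mul_le_mul_left r (by omega)
      have h7 : r * 2 / 2 ≤ r * (r - 1) / 2 := Nat.div_le_div_right h6
      have h8 : r * 2 / 2 = r := by omega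
      omega
    have harith : r * (h + 1 + 1 - r) = r * (h + 1 - r) + r := by
      have : h + 1 + 1 - r = (h + 1 - r) + 1 := by omega
      rw [this, Nat.mul_succ]
    omega

/-- counting subsets of card ≤ t of a finset of card N. -/
lemma card_subsets_le {β : Type*} [DecidableEq β] (P : Finset β) (t : ℕ) :
    ((P.powerset).filter (fun W => W.card ≤ t)).card ≤
      ∑ k ∈ Finset.range (t + 1), (P.card).choose k := by
  classical
  have hsub : (P.powerset).filter (fun W => W.card ≤ t) ⊆
      (Finset.range (t + 1)).biUnion (fun k => Finset.powersetCard k P) := by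
    intro W hW
    rw [Finset.mem_filter, Finset.mem_powerset] at hW
    rw [Finset.mem_biUnion]
    exact ⟨W.card, Finset.mem_range.2 (by omega), Finset.mem_powersetCard.2 ⟨hW.1, rfl⟩⟩
  calc ((P.powerset).filter (fun W => W.card ≤ t)).card
      ≤ ((Finset.range (t + 1)).biUnion (fun k => Finset.powersetCard k P)).card :=
        Finset.card_le_card hsub
    _ ≤ ∑ k ∈ Finset.range (t + 1), (Finset.powersetCard k P).card :=
        Finset.card_biUnion_le
    _ = ∑ k ∈ Finset.range (t + 1), (P.card).choose k := by
        simp [Finset.card_powersetCard]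

/-- real bound on the partial binomial sum. -/
lemma binom_sum_le {N t : ℕ} {m : ℝ} (hm : 1 ≤ m) :
    (∑ k ∈ Finset.range (t + 1), ((N.choose k : ℝ))) ≤ m ^ t * Real.exp (N / m) := by
  have hm0 : (0 : ℝ) < m := by linarith
  have step1 : (∑ k ∈ Finset.range (t + 1), ((N.choose k : ℝ))) ≤
      m ^ t * ∑ k ∈ Finset.range (t + 1), (N.choose k : ℝ) * (1 / m) ^ k := by
    rw [Finset.mul_sum]
    apply Finset.sum_le_sum
    intro k hk
    rw [Finset.mem_range] at hk
    have hkt : k ≤ t := by omega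
    have : m ^ t * ((N.choose k : ℝ) * (1 / m) ^ k) = (N.choose k : ℝ) * m ^ (t - k) := by
      rw [one_div, inv_pow, ← mul_assoc, mul_comm (m ^ t), mul_assoc, ← pow_sub₀ m (by positivity) hkt]
    rw [this]
    have h1 : (1:ℝ) ≤ m ^ (t - k) := one_le_pow₀ hm
    exact le_mul_of_one_le_right (Nat.cast_nonneg _) h1
  have step2 : (∑ k ∈ Finset.range (t + 1), (N.choose k : ℝ) * (1 / m) ^ k) ≤
      (1 + 1 / m) ^ N := by
    have hx0 : (0:ℝ) ≤ 1 / m := by positivity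
    set u := max (t + 1) (N + 1) with hu
    have hsub1 : Finset.range (t + 1) ⊆ Finset.range u :=
      Finset.range_subset_range.2 (le_max_left _ _)
    have hsub2 : Finset.range (N + 1) ⊆ Finset.range u :=
      Finset.range_subset_range.2 (le_max_right _ _)
    have hle1 : (∑ k ∈ Finset.range (t + 1), (N.choose k : ℝ) * (1 / m) ^ k) ≤
        ∑ k ∈ Finset.range u, (N.choose k : ℝ) * (1 / m) ^ k := by
      apply Finset.sum_le_sum_of_subset_of_nonneg hsub1
      intro k _ _
      positivity
    have heq : (∑ k ∈ Finset.range u, (N.choose k : ℝ) * (1 / m) ^ k) =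
        ∑ k ∈ Finset.range (N + 1), (N.choose k : ℝ) * (1 / m) ^ k := by
      symm
      apply Finset.sum_subset hsub2
      intro k _ hk
      rw [Finset.mem_range, not_lt] at hk
      rw [Nat.choose_eq_zero_of_lt (by omega)]
      simp
    have hpow : (1 + 1 / m : ℝ) ^ N =
        ∑ k ∈ Finset.range (N + 1), (N.choose k : ℝ) * (1 / m) ^ k := by
      rw [add_comm (1 : ℝ) (1 / m), add_pow]
      apply Finset.sum_congr rfl
      intro k _
      rw [one_pow]
      ring
    rw [hpow, ← heq]
    exact hle1
  have step3 : (1 + 1 / m : ℝ) ^ N ≤ Real.exp (N / m) := by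
    have h1 : (1 + 1 / m : ℝ) ≤ Real.exp (1 / m) := by
      have := Real.add_one_le_exp (1 / m)
      linarith
    calc (1 + 1 / m : ℝ) ^ N ≤ (Real.exp (1 / m)) ^ N := by
          apply pow_le_pow_left₀ (by positivity) h1
      _ = Real.exp (N / m) := by
          rw [← Real.exp_nat_mul]
          congr 1
          field_simp
  calc (∑ k ∈ Finset.range (t + 1), ((N.choose k : ℝ)))
      ≤ m ^ t * ∑ k ∈ Finset.range (t + 1), (N.choose k : ℝ) * (1 / m) ^ k := step1
    _ ≤ m ^ t * (1 + 1 / m) ^ N := by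
        apply mul_le_mul_of_nonneg_left step2 (by positivity)
    _ ≤ m ^ t * Real.exp (N / m) := mul_le_mul_of_nonneg_left step3 (by positivity)


/-! ### The encoding of a paving matroid -/

attribute [local instance] Classical.propDecidable

/-- dependent `r`-sets of `M`, as finsets. -/
noncomputable def Zf (M : Matroid (Fin n)) (r : ℕ) : Finset (Finset (Fin n)) :=
  Finset.filter (fun A => A.card = r ∧ M.Dep ↑A) Finset.univ

lemma mem_Zf {M : Matroid (Fin n)} {r : ℕ} {A : Finset (Fin n)} :
    A ∈ Zf M r ↔ A.card = r ∧ M.Dep ↑A := by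
  rw [Zf, Finset.mem_filter]
  simp

/-- the closure of a finset, as a finset. -/
noncomputable def flatOf (M : Matroid (Fin n)) (A : Finset (Fin n)) : Finset (Fin n) :=
  (Set.toFinite (M.closure ↑A)).toFinset

lemma coe_flatOf (M : Matroid (Fin n)) (A : Finset (Fin n)) :
    (flatOf M A : Set (Fin n)) = M.closure ↑A := Set.Finite.coe_toFinset _

/-- the collection of nontrivial "hyperplanes". -/
noncomputable def Flats (M : Matroid (Fin n)) (r : ℕ) : Finset (Finset (Fin n)) :=
  (Zf M r).image (flatOf M)

/-- the code of a paving matroid: all windows of all of its nontrivial hyperplanes. -/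
noncomputable def code (M : Matroid (Fin n)) (r : ℕ) : Finset (Finset (Fin n)) :=
  (Flats M r).biUnion (windows r)

section Glue

variable (hE : M.E = Set.univ) (hrk : mrk M = r) (hpav : Paving M) (hr : 3 ≤ r)
include hE hrk hpav hr

lemma subset_flatOf {A : Finset (Fin n)} (hA : A ∈ Zf M r) : A ⊆ flatOf M A := by
  intro x hx
  rw [← Finset.mem_coe, coe_flatOf]
  exact M.subset_closure ↑A (by rw [hE]; exact Set.subset_univ _) hx

lemma r_le_flatOf_card {A : Finset (Fin n)} (hA : A ∈ Zf M r) : r ≤ (flatOf M A).card := by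
  have h := Finset.card_le_card (subset_flatOf hE hrk hpav hr hA)
  rw [(mem_Zf.1 hA).1] at h
  exact h

lemma windows_subset_Zf {F B : Finset (Fin n)} (hF : F ∈ Flats M r)
    (hB : B ∈ windows r F) : B ∈ Zf M r := by
  obtain ⟨A, hA, rfl⟩ := Finset.mem_image.1 hF
  obtain ⟨hAcard, hAdep⟩ := mem_Zf.1 hA
  obtain ⟨j, hj, rfl⟩ := mem_windows_iff.1 hB
  have hrF : r ≤ (flatOf M A).card := r_le_flatOf_card hE hrk hpav hr hA
  have hlen : j + r ≤ (flatOf M A).toList.length := by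
    rw [Finset.length_toList]; omega
  have hcard : (window (flatOf M A).toList r j).card = r :=
    window_card _ (Finset.nodup_toList _) hlen
  have hsub : window (flatOf M A).toList r j ⊆ flatOf M A := by
    have := window_subset (flatOf M A).toList r j
    rwa [Finset.toList_toFinset] at this
  rw [mem_Zf]
  refine ⟨hcard, ?_⟩
  have hsub' : (window (flatOf M A).toList r j : Set (Fin n)) ⊆ M.closure ↑A := by
    rw [← coe_flatOf]
    exact_mod_cast hsub
  refine dep_of_subset_closure_dep hE hrk hpav (by omega) hAdep ?_ hsub' ?_
  · rw [Set.ncard_coe_finset]; exact hAcard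
  · rw [Set.ncard_coe_finset]; exact hcard

lemma code_subset_Zf : code M r ⊆ Zf M r := by
  intro B hB
  obtain ⟨F, hF, hBF⟩ := Finset.mem_biUnion.1 hB
  exact windows_subset_Zf hE hrk hpav hr hF hBF

lemma gen_sound {D : Finset (Fin n)} (hD : Gen r (code M r) D) : D ∈ Zf M r := by
  induction hD with
  | base hA => exact code_subset_Zf hE hrk hpav hr hA
  | @rule B C D' hB hC hint hsub hcard ihB ihC =>
    obtain ⟨hBcard, hBdep⟩ := mem_Zf.1 ihB
    obtain ⟨hCcard, hCdep⟩ := mem_Zf.1 ihC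
    rw [mem_Zf]
    refine ⟨hcard, ?_⟩
    refine dep_of_union_dep hE hrk hpav (by omega) hBdep ?_ hCdep ?_ ?_ ?_ ?_
    · rw [Set.ncard_coe_finset]; exact hBcard
    · rw [Set.ncard_coe_finset]; exact hCcard
    · rw [← Finset.coe_inter, Set.ncard_coe_finset]; exact hint
    · rw [← Finset.coe_union]; exact_mod_cast hsub
    · rw [Set.ncard_coe_finset]; exact hcard

lemma gen_complete {A : Finset (Fin n)} (hA : A ∈ Zf M r) : Gen r (code M r) A := by
  obtain ⟨hAcard, hAdep⟩ := mem_Zf.1 hA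
  have hF : flatOf M A ∈ Flats M r := Finset.mem_image_of_mem _ hA
  refine gen_of_windows_subset hr (r_le_flatOf_card hE hrk hpav hr hA) ?_ A
    (subset_flatOf hE hrk hpav hr hA) hAcard
  intro B hB
  exact Finset.mem_biUnion.2 ⟨flatOf M A, hF, hB⟩

lemma Zf_eq_gen : Zf M r = Finset.filter (fun D => Gen r (code M r) D) Finset.univ := by
  ext D
  rw [Finset.mem_filter]
  constructor
  · intro h; exact ⟨Finset.mem_univ _, gen_complete hE hrk hpav hr h⟩
  · intro h; exact gen_sound hE hrk hpav hr h.2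

/-- distinct flats share no (r-1)-subset. -/
lemma flats_disjoint {F₁ F₂ : Finset (Fin n)} (h1 : F₁ ∈ Flats M r) (h2 : F₂ ∈ Flats M r)
    (hne : F₁ ≠ F₂) :
    Disjoint (Finset.powersetCard (r - 1) F₁) (Finset.powersetCard (r - 1) F₂) := by
  rw [Finset.disjoint_left]
  intro S hS1 hS2
  obtain ⟨hS1sub, hS1card⟩ := Finset.mem_powersetCard.1 hS1
  obtain ⟨hS2sub, hS2card⟩ := Finset.mem_powersetCard.1 hS2
  obtain ⟨A₁, hA₁, rfl⟩ := Finset.mem_image.1 h1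
  obtain ⟨A₂, hA₂, rfl⟩ := Finset.mem_image.1 h2
  obtain ⟨hA₁card, hA₁dep⟩ := mem_Zf.1 hA₁
  obtain ⟨hA₂card, hA₂dep⟩ := mem_Zf.1 hA₂
  apply hne
  have hc1 : M.closure ↑S = M.closure ↑A₁ := by
    refine closure_eq_of_r1_subset hE hrk hpav (by omega) hA₁dep ?_ ?_ ?_
    · rw [Set.ncard_coe_finset]; exact hA₁card
    · rw [← coe_flatOf]; exact_mod_cast hS1sub
    · rw [Set.ncard_coe_finset]; exact hS1card
  have hc2 : M.closure ↑S = M.closure ↑A₂ := by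
    refine closure_eq_of_r1_subset hE hrk hpav (by omega) hA₂dep ?_ ?_ ?_
    · rw [Set.ncard_coe_finset]; exact hA₂card
    · rw [← coe_flatOf]; exact_mod_cast hS2sub
    · rw [Set.ncard_coe_finset]; exact hS2card
  have : M.closure ↑A₁ = M.closure ↑A₂ := hc1 ▸ hc2
  rw [flatOf, flatOf]
  congr 1

/-- the cardinality bound on the code. -/
lemma code_card_le : r * (code M r).card ≤ n.choose (r - 1) := by
  have h1 : (code M r).card ≤ ∑ F ∈ Flats M r, (F.card + 1 - r) := by
    calc (code M r).card ≤ ∑ F ∈ Flats M r, (windows r F).card := Finset.card_biUnion_le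
      _ ≤ ∑ F ∈ Flats M r, (F.card + 1 - r) := by
          apply Finset.sum_le_sum
          intro F _
          exact windows_card_le r F
  have h2 : r * (code M r).card ≤ ∑ F ∈ Flats M r, r * (F.card + 1 - r) := by
    rw [← Finset.mul_sum]
    exact Nat.mul_le_mul_left r h1
  have h3 : ∑ F ∈ Flats M r, r * (F.card + 1 - r) ≤
      ∑ F ∈ Flats M r, (F.card.choose (r - 1)) := by
    apply Finset.sum_le_sum
    intro F hF
    obtain ⟨A, hA, rfl⟩ := Finset.mem_image.1 hF
    exact numeric_choose hr (r_le_flatOf_card hE hrk hpav hr hA)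
  have h4 : ∑ F ∈ Flats M r, (F.card.choose (r - 1)) =
      ((Flats M r).biUnion (fun F => Finset.powersetCard (r - 1) F)).card := by
    rw [Finset.card_biUnion]
    · apply Finset.sum_congr rfl
      intro F _
      rw [Finset.card_powersetCard]
    · intro F₁ h1' F₂ h2' hne
      exact flats_disjoint hE hrk hpav hr h1' h2' hne
  have h5 : ((Flats M r).biUnion (fun F => Finset.powersetCard (r - 1) F)).card ≤
      n.choose (r - 1) := by
    have hsub : (Flats M r).biUnion (fun F => Finset.powersetCard (r - 1) F) ⊆
        Finset.powersetCard (r - 1) Finset.univ := by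
      intro S hS
      obtain ⟨F, _, hSF⟩ := Finset.mem_biUnion.1 hS
      obtain ⟨_, hScard⟩ := Finset.mem_powersetCard.1 hSF
      exact Finset.mem_powersetCard.2 ⟨Finset.subset_univ _, hScard⟩
    calc _ ≤ (Finset.powersetCard (r - 1) (Finset.univ : Finset (Fin n))).card :=
          Finset.card_le_card hsub
      _ = n.choose (r - 1) := by
          rw [Finset.card_powersetCard, Finset.card_univ, Fintype.card_fin]
  omega

/-- the matroid is determined by its dependent r-sets. -/
lemma eq_of_Zf_eq {M' : Matroid (Fin n)} (hE' : M'.E = Set.univ) (hrk' : mrk M' = r)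
    (hpav' : Paving M') (hZ : Zf M r = Zf M' r) : M = M' := by
  apply Matroid.ext_indep (hE.trans hE'.symm)
  intro I hIE
  have hIfin : I.Finite := Set.toFinite I
  have hIE' : I ⊆ M'.E := by rw [hE']; exact Set.subset_univ I
  have hIEu : I ⊆ M.E := by rw [hE]; exact Set.subset_univ I
  rcases lt_trichotomy I.ncard r with hlt | heq | hgt
  · constructor
    · intro _; exact indep_of_small hE' hrk' hpav' hlt
    · intro _; exact indep_of_small hE hrk hpav hlt
  · have hmem : ∀ (N : Matroid (Fin n)), N.E = Set.univ →
        (hIfin.toFinset ∈ Zf N r ↔ N.Dep I) := by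
      intro N hNE
      rw [mem_Zf]
      have h1 : hIfin.toFinset.card = r := by
        rw [← Set.ncard_eq_toFinset_card]
        exact heq
      have h2 : (hIfin.toFinset : Set (Fin n)) = I := Set.Finite.coe_toFinset _
      rw [h1, h2]
      simp
    constructor
    · intro hIndep
      rw [← Matroid.not_dep_iff hIE']
      rw [← hmem M' hE', ← hZ, hmem M hE]
      exact fun hdep => hdep.not_indep hIndep
    · intro hIndep
      rw [← Matroid.not_dep_iff hIEu]
      rw [← hmem M hE, hZ, hmem M' hE']
      exact fun hdep => hdep.not_indep hIndep
  · constructor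
    · intro hI
      have := indep_ncard_le hE hrk hI
      omega
    · intro hI
      have := indep_ncard_le hE' hrk' hI
      omega

end Glue

end PavingProof

/-- For all 3 ≤ r ≤ n, log p(n,r) ≤ (1/(n−r+1)) · C(n,r) · log(e·(n−r+1)). -/
theorem paving_upper_bound (n r : ℕ) (hr : 3 ≤ r) (hrn : r ≤ n) :
    Real.log (numPaving n r) ≤
      (1 / ((n : ℝ) - r + 1)) * (n.choose r : ℝ) *
        Real.log (Real.exp 1 * ((n : ℝ) - r + 1)) := by
  classical
  have hrpos : 0 < r := by omega
  set PP := {M : Matroid (Fin n) | M.E = Set.univ ∧ mrk M = r ∧ Paving M} with hPP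
  have hp : numPaving n r = PP.ncard := rfl
  set t := n.choose (r - 1) / r with ht
  set N := n.choose r with hN
  set pool : Finset (Finset (Fin n)) := Finset.powersetCard r Finset.univ with hpool
  set WW : Finset (Finset (Finset (Fin n))) := pool.powerset.filter (fun W => W.card ≤ t) with hWW
  -- injectivity of the coding map on PP
  have hinj : Set.InjOn (fun M => PavingProof.code M r) PP := by
    intro M hM M' hM' hcode
    obtain ⟨hE, hrk, hpav⟩ := hM
    obtain ⟨hE', hrk', hpav'⟩ := hM'
    have hcode' : PavingProof.code M r = PavingProof.code M' r := hcode
    refine PavingProof.eq_of_Zf_eq hE hrk hpav hr hE' hrk' hpav' ?_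
    rw [PavingProof.Zf_eq_gen hE hrk hpav hr, PavingProof.Zf_eq_gen hE' hrk' hpav' hr,
      hcode']
  -- the image of the coding map lands in WW
  have himg : (fun M => PavingProof.code M r) '' PP ⊆ ↑WW := by
    rintro _ ⟨M, hM, rfl⟩
    obtain ⟨hE, hrk, hpav⟩ := hM
    rw [Finset.mem_coe, hWW, Finset.mem_filter, Finset.mem_powerset]
    refine ⟨?_, ?_⟩
    · intro B hB
      have hBZ := PavingProof.code_subset_Zf hE hrk hpav hr hB
      rw [PavingProof.mem_Zf] at hBZ
      exact Finset.mem_powersetCard.2 ⟨Finset.subset_univ _, hBZ.1⟩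
    · show (PavingProof.code M r).card ≤ t
      rw [ht, Nat.le_div_iff_mul_le hrpos]
      have := PavingProof.code_card_le hE hrk hpav hr
      rwa [Nat.mul_comm] at this
  -- counting
  have hcard1 : PP.ncard ≤ WW.card := by
    calc PP.ncard = ((fun M => PavingProof.code M r) '' PP).ncard :=
          (Set.ncard_image_of_injOn hinj).symm
      _ ≤ (↑WW : Set (Finset (Finset (Fin n)))).ncard :=
          Set.ncard_le_ncard himg (Finset.finite_toSet WW)
      _ = WW.card := Set.ncard_coe_finset WW
  have hpoolcard : pool.card = N := by
    rw [hpool, Finset.card_powersetCard, Finset.card_univ, Fintype.card_fin]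
  have hcard2 : WW.card ≤ ∑ k ∈ Finset.range (t + 1), N.choose k := by
    have := PavingProof.card_subsets_le pool t
    rwa [hpoolcard] at this
  -- real analysis
  set m : ℝ := (n : ℝ) - r + 1 with hm
  have hm1 : (1 : ℝ) ≤ m := by
    have : (r : ℝ) ≤ n := by exact_mod_cast hrn
    rw [hm]; linarith
  have hm0 : (0 : ℝ) < m := by linarith
  have hsum : (∑ k ∈ Finset.range (t + 1), ((N.choose k : ℝ))) ≤
      m ^ t * Real.exp (N / m) := PavingProof.binom_sum_le hm1
  have hcount : (numPaving n r : ℝ) ≤ m ^ t * Real.exp (N / m) := by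
    have h1 : (numPaving n r : ℝ) ≤ (∑ k ∈ Finset.range (t + 1), ((N.choose k : ℝ))) := by
      rw [hp]
      have : (PP.ncard : ℝ) ≤ ((∑ k ∈ Finset.range (t + 1), N.choose k : ℕ) : ℝ) := by
        exact_mod_cast le_trans hcard1 hcard2
      rwa [Nat.cast_sum] at this
    linarith
  -- the identity N * r = C(n, r-1) * (n - r + 1)
  have hid : (N : ℝ) * r = (n.choose (r - 1) : ℝ) * m := by
    have h := Nat.choose_succ_right_eq n (r - 1)
    have hr1 : r - 1 + 1 = r := by omega
    rw [hr1] at h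
    have h' : (n.choose r : ℝ) * r = (n.choose (r - 1) : ℝ) * ((n - (r - 1) : ℕ) : ℝ) := by
      exact_mod_cast h
    have hcast : ((n - (r - 1) : ℕ) : ℝ) = m := by
      rw [Nat.cast_sub (by omega), Nat.cast_sub (by omega)]
      push_cast
      rw [hm]; ring
    rw [hcast] at h'
    exact h'
  have htle : (t : ℝ) ≤ (N : ℝ) / m := by
    have h1 : (t : ℝ) ≤ (n.choose (r - 1) : ℝ) / r := Nat.cast_div_le
    have h2 : (n.choose (r - 1) : ℝ) / r = (N : ℝ) / m := by
      rw [div_eq_div_iff (by positivity : (r:ℝ) ≠ 0) hm0.ne']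
      linarith [hid]
    linarith [h1, h2.symm.le]
  -- conclude
  rcases Nat.eq_zero_or_pos (numPaving n r) with hz | hpos
  · rw [hz, Nat.cast_zero, Real.log_zero]
    have he : (1 : ℝ) ≤ Real.exp 1 * m := by
      nlinarith [Real.add_one_le_exp (1 : ℝ)]
    have hlog : 0 ≤ Real.log (Real.exp 1 * m) := Real.log_nonneg he
    have : (0:ℝ) ≤ (1 / m) * (N : ℝ) := by positivity
    exact mul_nonneg this hlog
  · have hppos : (0 : ℝ) < (numPaving n r : ℝ) := by exact_mod_cast hpos
    have hlogle : Real.log (numPaving n r) ≤ Real.log (m ^ t * Real.exp ((N : ℝ) / m)) :=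
      Real.log_le_log hppos hcount
    rw [Real.log_mul (pow_ne_zero _ (by linarith)) (Real.exp_ne_zero _), Real.log_pow,
      Real.log_exp] at hlogle
    have hlogm : 0 ≤ Real.log m := Real.log_nonneg hm1
    have h2 : (t : ℝ) * Real.log m ≤ ((N : ℝ) / m) * Real.log m :=
      mul_le_mul_of_nonneg_right htle hlogm
    have hrhs : (1 / m) * (N : ℝ) * Real.log (Real.exp 1 * m) =
        ((N : ℝ) / m) * Real.log m + (N : ℝ) / m := by
      rw [Real.log_mul (Real.exp_ne_zero 1) (by linarith), Real.log_exp]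
      ring
    calc Real.log (numPaving n r) ≤ (t : ℝ) * Real.log m + (N : ℝ) / m := hlogle
      _ ≤ ((N : ℝ) / m) * Real.log m + (N : ℝ) / m := by linarith
      _ = (1 / m) * (N : ℝ) * Real.log (Real.exp 1 * m) := hrhs.symm
end

section
/- Let r ≥ 3 and n ≥ 2r, and let M be a matroid of rank r on a ground set of n elements. Then the number of essential flats of M of rank less than r is at most (1/(n−r+1)) · C(n,r). -/
open Matroid Set Filter Real

namespace PavingEnum

/-- `T` is the truncation of `N`: same ground set, and the independent sets of `T`
are exactly the independent sets of `N` of cardinality at most `rk N − 1`. -/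
def IsTruncationOf {α : Type*} (T N : Matroid α) : Prop :=
  T.E = N.E ∧ ∀ I : Set α, T.Indep I ↔ (N.Indep I ∧ I.ncard + 1 ≤ mrk N)

/-- `N` is an erection of `M` if `T(N) = M` or `N = M`. -/
def IsErection {α : Type*} (N M : Matroid α) : Prop :=
  IsTruncationOf M N ∨ N = M

/-- A set `X` is `k`-closed in `M` if it contains the closure of each of its
subsets of cardinality at most `k`. -/
def KClosed {α : Type*} (M : Matroid α) (k : ℕ) (X : Set α) : Prop :=
  ∀ Y ⊆ X, Y.encard ≤ (k : ℕ∞) → M.closure Y ⊆ X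

/-- The `k`-closure of a set: the intersection of all `k`-closed sets containing it. -/
def kClosure {α : Type*} (M : Matroid α) (k : ℕ) (X : Set α) : Set α :=
  ⋂₀ {Y | KClosed M k Y ∧ X ⊆ Y}

/-- A flat `F` of `M` of rank `k` is essential if the restriction `M|F` has a
nontrivial erection, i.e. there is a matroid on ground set `F` of rank `k+1`
whose truncation is `M|F`. -/
def IsEssentialFlat {α : Type*} (M : Matroid α) (F : Set α) : Prop :=
  M.IsFlat F ∧ ∃ N : Matroid α, N.E = F ∧ mrk N = mrnk M F + 1 ∧ IsTruncationOf (M ↾ F) N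

end PavingEnum

open PavingEnum

namespace EssProofAux

open Matroid Set PavingEnum

variable {α β γ : Type*}

section Counting

/-- pairs of (set, element of set) -/
def pairs (𝒜 : Set (Set α)) : Set (Set α × α) := {p | p.1 ∈ 𝒜 ∧ p.2 ∈ p.1}

lemma pairs_mono {𝒜 ℬ : Set (Set α)} (h : 𝒜 ⊆ ℬ) : pairs 𝒜 ⊆ pairs ℬ :=
  fun p hp => ⟨h hp.1, hp.2⟩

lemma pairs_finite {𝒜 : Set (Set α)} (h𝒜 : 𝒜.Finite) (h : ∀ X ∈ 𝒜, X.Finite) :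
    (pairs 𝒜).Finite := by
  refine Set.Finite.induction_on
    (motive := fun 𝒜 _ => (∀ X ∈ 𝒜, X.Finite) → (pairs 𝒜).Finite) _ h𝒜 ?_ ?_ h
  · intro _; convert Set.finite_empty; ext p; simp [pairs]
  · intro a s ha hs ih h
    have h1 : pairs (insert a s) ⊆ (Prod.mk a '' a) ∪ pairs s := by
      rintro ⟨X, y⟩ ⟨hX, hy⟩
      rcases hX with rfl | hX
      · exact Or.inl ⟨y, hy, rfl⟩
      · exact Or.inr ⟨hX, hy⟩
    exact (((h a (mem_insert _ _)).image _).union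
      (ih fun X hX => h X (mem_insert_of_mem _ hX))).subset h1

lemma pairs_ncard {𝒜 : Set (Set α)} (h𝒜 : 𝒜.Finite) {m : ℕ}
    (hm : ∀ X ∈ 𝒜, X.Finite ∧ X.ncard = m) :
    (pairs 𝒜).ncard = 𝒜.ncard * m := by
  refine Set.Finite.induction_on
    (motive := fun 𝒜 _ => (∀ X ∈ 𝒜, X.Finite ∧ X.ncard = m) → (pairs 𝒜).ncard = 𝒜.ncard * m)
    _ h𝒜 ?_ ?_ hm
  · intro _; rw [show pairs (∅ : Set (Set α)) = ∅ by ext p; simp [pairs]]; simp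
  · intro a s ha hs ih hm
    have heq : pairs (insert a s) = (Prod.mk a '' a) ∪ pairs s := by
      ext ⟨X, y⟩
      constructor
      · rintro ⟨hX, hy⟩
        rcases hX with rfl | hX
        · exact Or.inl ⟨y, hy, rfl⟩
        · exact Or.inr ⟨hX, hy⟩
      · rintro (⟨z, hz, hzz⟩ | ⟨hX, hy⟩)
        · cases hzz; exact ⟨mem_insert _ _, hz⟩
        · exact ⟨mem_insert_of_mem _ hX, hy⟩
    have hdisj : Disjoint (Prod.mk a '' a) (pairs s) := by
      rw [Set.disjoint_left]
      rintro ⟨X, y⟩ ⟨z, _, hzz⟩ ⟨hX, _⟩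
      cases hzz; exact ha hX
    have hfin1 : (Prod.mk a '' a).Finite := (hm a (mem_insert _ _)).1.image _
    have hfin2 : (pairs s).Finite :=
      pairs_finite hs (fun X hX => (hm X (mem_insert_of_mem _ hX)).1)
    have himg : (Prod.mk a '' a).ncard = m := by
      rw [Set.ncard_image_of_injective _ (fun x y h => (Prod.ext_iff.1 h).2)]
      exact (hm a (mem_insert _ _)).2
    rw [heq, Set.ncard_union_eq hdisj hfin1 hfin2, himg,
      ih (fun X hX => hm X (mem_insert_of_mem _ hX)),
      Set.ncard_insert_of_notMem ha hs]
    ring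

lemma ncard_sprod {s : Set β} {t : Set γ} (hs : s.Finite) (ht : t.Finite) :
    (s ×ˢ t).ncard = s.ncard * t.ncard := by
  refine Set.Finite.induction_on
    (motive := fun s _ => (s ×ˢ t).ncard = s.ncard * t.ncard) _ hs ?_ ?_
  · simp
  · intro a s ha hs ih
    rw [Set.insert_prod, Set.ncard_union_eq ?_ (ht.image _) (hs.prod ht), ih,
      Set.ncard_image_of_injective _ (fun x y h => (Prod.ext_iff.1 h).2),
      Set.ncard_insert_of_notMem ha hs]
    · ring
    · rw [Set.disjoint_left]
      rintro ⟨x, y⟩ ⟨z, _, hzz⟩ hmem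
      cases hzz
      exact ha (Set.mem_prod.1 hmem).1

/-- double counting bound for a pairwise disjoint family -/
lemma family_ncard_bound {A : Set β} (hA : A.Finite) (S : β → Set γ) {q : ℕ}
    (Ω₀ : Set γ) (hΩ₀ : Ω₀.Finite) (hsub₀ : ∀ a ∈ A, S a ⊆ Ω₀)
    (hdisj₀ : ∀ a ∈ A, ∀ b ∈ A, a ≠ b → Disjoint (S a) (S b))
    (hq₀ : ∀ a ∈ A, q ≤ (S a).ncard) : A.ncard * q ≤ Ω₀.ncard := by
  refine Set.Finite.induction_on
    (motive := fun A _ => ∀ (Ω : Set γ), Ω.Finite → (∀ a ∈ A, S a ⊆ Ω) →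
      (∀ a ∈ A, ∀ b ∈ A, a ≠ b → Disjoint (S a) (S b)) →
      (∀ a ∈ A, q ≤ (S a).ncard) → A.ncard * q ≤ Ω.ncard) _ hA ?_ ?_
    Ω₀ hΩ₀ hsub₀ hdisj₀ hq₀
  · intro Ω _ _ _ _; simp
  · intro a s ha hs ih Ω hΩ hsub hdisj hq
    have hSa : S a ⊆ Ω := hsub a (mem_insert _ _)
    have h1 : ∀ b ∈ s, S b ⊆ Ω \ S a := by
      intro b hb
      have hd := hdisj a (mem_insert _ _) b (mem_insert_of_mem _ hb)
        (by rintro rfl; exact ha hb)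
      exact Set.subset_diff.2 ⟨hsub b (mem_insert_of_mem _ hb), hd.symm⟩
    have h2 := ih (Ω \ S a) (hΩ.diff) h1
      (fun x hx y hy hxy => hdisj x (mem_insert_of_mem _ hx) y (mem_insert_of_mem _ hy) hxy)
      (fun x hx => hq x (mem_insert_of_mem _ hx))
    have h3 : (Ω \ S a).ncard + (S a).ncard = Ω.ncard :=
      Set.ncard_diff_add_ncard_of_subset hSa hΩ
    have h4 : q ≤ (S a).ncard := hq a (mem_insert _ _)
    rw [Set.ncard_insert_of_notMem ha hs]
    calc (s.ncard + 1) * q = s.ncard * q + q := by ring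
    _ ≤ (Ω \ S a).ncard + (S a).ncard := Nat.add_le_add h2 h4
    _ = Ω.ncard := h3

/-- number of r-subsets of a finite set -/
lemma ncard_subsets_card {D : Set α} (hD : D.Finite) (r : ℕ) :
    {X : Set α | X ⊆ D ∧ X.ncard = r}.ncard = (D.ncard).choose r := by
  classical
  have heq : {X : Set α | X ⊆ D ∧ X.ncard = r} =
      (fun s : Finset α => (s : Set α)) '' ↑(hD.toFinset.powersetCard r) := by
    ext X
    simp only [mem_setOf_eq, Set.mem_image, Finset.coe_sort_coe, Finset.mem_coe,
      Finset.mem_powersetCard]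
    constructor
    · rintro ⟨hXD, hXr⟩
      have hXfin : X.Finite := hD.subset hXD
      refine ⟨hXfin.toFinset, ⟨?_, ?_⟩, by simp⟩
      · intro x hx; simp only [Set.Finite.mem_toFinset] at hx ⊢; exact hXD hx
      · rw [← Set.ncard_eq_toFinset_card X hXfin]; exact hXr
    · rintro ⟨s, ⟨hs, hcard⟩, rfl⟩
      refine ⟨fun x hx => ?_, by rw [Set.ncard_coe_finset]; exact hcard⟩
      have := hs hx; simpa using this
  rw [heq, Set.ncard_image_of_injective _ Finset.coe_injective, Set.ncard_coe_finset,
    Finset.card_powersetCard, Set.ncard_eq_toFinset_card D hD]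

lemma choose_lower (m j : ℕ) (h1 : 1 ≤ j) (h2 : j ≤ m) : m + 1 - j ≤ m.choose j := by
  induction j generalizing m with
  | zero => omega
  | succ j ih =>
    rcases Nat.eq_or_lt_of_le h1 with h | h
    · cases h; simpa using h2
    · obtain ⟨m, rfl⟩ : ∃ m', m = m' + 1 := ⟨m - 1, by omega⟩
      have := ih (m := m) (by omega) (by omega)
      calc m + 1 + 1 - (j + 1) = m + 1 - j := by omega
      _ ≤ m.choose j := this
      _ ≤ m.choose j + m.choose (j+1) := Nat.le_add_right _ _
      _ = (m+1).choose (j+1) := (Nat.choose_succ_succ' m j).symm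

lemma nat_add_le_mul {A B : ℕ} (hA : 1 ≤ A) (hB : 1 ≤ B) : A + B ≤ A * B + 1 := by
  obtain ⟨a, rfl⟩ : ∃ a, A = a + 1 := ⟨A - 1, by omega⟩
  obtain ⟨b, rfl⟩ : ∃ b, B = b + 1 := ⟨B - 1, by omega⟩
  nlinarith

end Counting

section MatroidRank

variable {M : Matroid α} {B B' I I' J X F : Set α} {e : α}

lemma sSup_eq_of_mem_of_forall_le {S : Set ℕ} {c : ℕ} (hc : c ∈ S) (h : ∀ x ∈ S, x ≤ c) :
    sSup S = c :=
  le_antisymm (csSup_le ⟨c, hc⟩ h) (le_csSup ⟨c, h⟩ hc)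

lemma mrk_eq_base (hB : M.IsBase B) : mrk M = B.ncard := by
  refine sSup_eq_of_mem_of_forall_le ⟨B, hB, rfl⟩ ?_
  rintro x ⟨B', hB', rfl⟩
  exact le_of_eq (hB'.ncard_eq_ncard_of_isBase hB)

lemma indep_ncard_le_basis (hE : M.E.Finite) (hI : M.IsBasis I X) (hJ : M.Indep J)
    (hJX : J ⊆ X) : J.ncard ≤ I.ncard := by
  obtain ⟨I', hI', hJI'⟩ := hJ.subset_isBasis_of_subset hJX hI.subset_ground
  have h1 : I'.ncard = I.ncard := by
    have := hI'.encard_eq_encard hI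
    rw [Set.ncard_def, Set.ncard_def, this]
  rw [← h1]
  exact Set.ncard_le_ncard hJI' (hE.subset (hI'.indep.subset_ground))

lemma mrnk_eq_basis (hE : M.E.Finite) (hI : M.IsBasis I X) : mrnk M X = I.ncard := by
  refine sSup_eq_of_mem_of_forall_le ⟨I, hI.subset, hI.indep, rfl⟩ ?_
  rintro x ⟨J, hJX, hJ, rfl⟩
  exact indep_ncard_le_basis hE hI hJ hJX

lemma indep_ncard_le_mrnk (hE : M.E.Finite) (hJ : M.Indep J) (hJX : J ⊆ X)
    (hX : X ⊆ M.E) : J.ncard ≤ mrnk M X := by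
  obtain ⟨I, hI⟩ := M.exists_isBasis X hX
  rw [mrnk_eq_basis hE hI]
  exact indep_ncard_le_basis hE hI hJ hJX

lemma singleton_indep_iff : M.Indep {e} ↔ e ∈ M.E \ M.closure ∅ := by
  have h := (M.empty_indep).insert_indep_iff (e := e)
  simp only [insert_empty_eq, mem_empty_iff_false, or_false] at h
  exact h

lemma indep_subset_nonloops (hI : M.Indep I) : I ⊆ M.E \ M.closure ∅ := by
  intro x hx
  exact singleton_indep_iff.1 (hI.subset (by simpa using hx))

lemma spanning_of_indep_ncard (hE : M.E.Finite) (hF : M.IsFlat F) (hI : M.Indep I)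
    (hIF : I ⊆ F) (hcard : I.ncard = mrnk M F) : M.closure I = F := by
  obtain ⟨I', hI', hII'⟩ := hI.subset_isBasis_of_subset hIF hF.subset_ground
  have hI'card : I'.ncard = mrnk M F := (mrnk_eq_basis hE hI').symm
  have : I = I' := Set.eq_of_subset_of_ncard_le hII'
    (by rw [hI'card, hcard]) (hE.subset (hI'.indep.subset_ground))
  rw [this, hI'.closure_eq_closure, hF.closure]

lemma swap_indep (hE : M.E.Finite) (hIJ : M.Indep (I ∪ J)) (hI' : M.Indep I')
    (hcl : M.closure I' = M.closure I) (hcard : I'.ncard = I.ncard)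
    (hd1 : Disjoint I J) (hd2 : Disjoint I' J) : M.Indep (I' ∪ J) := by
  have hJE : J ⊆ M.E := (subset_union_right).trans hIJ.subset_ground
  have hI'E : I' ∪ J ⊆ M.E := union_subset hI'.subset_ground hJE
  obtain ⟨K, hK⟩ := M.exists_isBasis (I' ∪ J) hI'E
  have hcls : M.closure (I' ∪ J) = M.closure (I ∪ J) := by
    rw [← closure_union_closure_left_eq, hcl, closure_union_closure_left_eq]
  have hsub : I ∪ J ⊆ M.closure K := by
    rw [hK.closure_eq_closure, hcls]
    exact M.subset_closure _ hIJ.subset_ground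
  have hcard1 : (I ∪ J).ncard ≤ K.ncard := by
    have hKb : M.IsBasis K (M.closure K) := hK.indep.isBasis_closure
    exact indep_ncard_le_basis hE hKb hIJ hsub
  have hfinIJ : (I' ∪ J).Finite := hE.subset hI'E
  have hcard2 : (I' ∪ J).ncard = (I ∪ J).ncard := by
    rw [Set.ncard_union_eq hd2 (hfinIJ.subset subset_union_left)
        (hfinIJ.subset subset_union_right),
      Set.ncard_union_eq hd1 (hE.subset hIJ.subset_ground |>.subset subset_union_left)
        (hE.subset hIJ.subset_ground |>.subset subset_union_right), hcard]
  have : I' ∪ J = K := by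
    refine (Set.eq_of_subset_of_ncard_le hK.subset ?_ hfinIJ).symm
    rw [hcard2]; exact hcard1
  rw [this]; exact hK.indep

end MatroidRank

section SSets

variable {M : Matroid α} {F : Set α}

/-- the set of elements whose removal from `X` leaves an independent set -/
def CXs (M : Matroid α) (X : Set α) : Set α := {x ∈ X | M.Indep (X \ {x})}

def SD (M : Matroid α) (r : ℕ) (F : Set α) : Set (Set α × α) :=
  {p | p.2 ∈ p.1 ∧ p.1 ⊆ M.E \ M.closure ∅ ∧ p.1.ncard = r ∧ M.Dep p.1 ∧
    M.closure (CXs M p.1) = F}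

def SI (M : Matroid α) (r : ℕ) (F : Set α) : Set (Set α × α) :=
  {p | p.2 ∈ p.1 ∧ p.1.ncard = r ∧ M.Indep p.1 ∧ M.closure (p.1 \ {p.2}) = F}

def SS (M : Matroid α) (r : ℕ) (F : Set α) : Set (Set α × α) := SD M r F ∪ SI M r F

lemma SS_subset_pairs (M : Matroid α) (r : ℕ) (F : Set α) :
    SS M r F ⊆ pairs {X : Set α | X ⊆ M.E \ M.closure ∅ ∧ X.ncard = r} := by
  rintro ⟨X, y⟩ (⟨hy, hXE, hXr, _⟩ | ⟨hy, hXr, hXi, _⟩)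
  · exact ⟨⟨hXE, hXr⟩, hy⟩
  · exact ⟨⟨indep_subset_nonloops hXi, hXr⟩, hy⟩

lemma SS_disjoint (M : Matroid α) (r : ℕ) {F F' : Set α} (hne : F ≠ F') :
    Disjoint (SS M r F) (SS M r F') := by
  rw [Set.disjoint_left]
  rintro ⟨X, y⟩ (⟨_, _, _, hdep, hcl⟩ | ⟨_, _, hind, hcl⟩)
    (⟨_, _, _, hdep', hcl'⟩ | ⟨_, _, hind', hcl'⟩)
  · exact hne (hcl ▸ hcl' ▸ rfl)
  · exact hdep.not_indep hind'
  · exact hdep'.not_indep hind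
  · exact hne (hcl ▸ hcl' ▸ rfl)

end SSets

section PerFlat

variable {M : Matroid α} {F : Set α}

lemma SS_lower (hE : M.E.Finite) (hF : IsEssentialFlat M F)
    (hk1 : 1 ≤ mrnk M F) (hkr : mrnk M F < mrk M) :
    mrk M * ((M.E \ M.closure ∅).ncard + 1) ≤ (SS M (mrk M) F).ncard + mrk M * mrk M := by
  obtain ⟨hFlat, N, hNE, hNrk, hTE, hTI⟩ := hF
  set L := M.closure ∅ with hL
  set k := mrnk M F with hkdef
  set r := mrk M with hrdef
  have hFE : F ⊆ M.E := hFlat.subset_ground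
  have hFfin : F.Finite := hE.subset hFE
  have hclF : M.closure F = F := hFlat.closure
  have hLF : L ⊆ F := by rw [hL, ← hclF]; exact M.closure_subset_closure (empty_subset F)
  have htr : ∀ I : Set α, (M.Indep I ∧ I ⊆ F) ↔ (N.Indep I ∧ I.ncard ≤ k) := by
    intro I
    have h := hTI I
    rw [restrict_indep_iff, hNrk] at h
    constructor
    · intro h2; obtain ⟨h3, h4⟩ := h.1 h2; exact ⟨h3, by omega⟩
    · intro h2; exact h.2 ⟨h2.1, by omega⟩
  obtain ⟨I₀, hI₀⟩ := M.exists_isBasis F hFE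
  have hI₀card : I₀.ncard = k := (mrnk_eq_basis hE hI₀).symm
  have hI₀F : I₀ ⊆ F := hI₀.subset
  have hclI₀ : M.closure I₀ = F := by rw [hI₀.closure_eq_closure, hclF]
  have hub : ∀ J, M.Indep J → J ⊆ F → J.ncard ≤ k :=
    fun J hJ hJF => indep_ncard_le_mrnk hE hJ hJF hFE
  have hspan : ∀ I, M.Indep I → I ⊆ F → I.ncard = k → M.closure I = F :=
    fun I h1 h2 h3 => spanning_of_indep_ncard hE hFlat h1 h2 h3
  -- facts about bases of the erection N
  have hNb : ∀ C, N.IsBase C → C.ncard = k + 1 := by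
    intro C hC
    have h := mrk_eq_base hC
    rw [hNrk] at h
    omega
  set 𝒞 := {C : Set α | N.IsBase C} with h𝒞def
  have hCsub : ∀ C ∈ 𝒞, C ⊆ F := fun C hC => hNE ▸ hC.subset_ground
  have hCfin : ∀ C ∈ 𝒞, C.Finite := fun C hC => hFfin.subset (hCsub C hC)
  have hCcard : ∀ C ∈ 𝒞, C.ncard = k + 1 := fun C hC => hNb C hC
  have hCdel : ∀ C ∈ 𝒞, ∀ x ∈ C,
      M.Indep (C \ {x}) ∧ (C \ {x}) ⊆ F ∧ (C \ {x}).ncard = k := by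
    intro C hC x hx
    have hcard : (C \ {x}).ncard = k := by
      rw [Set.ncard_diff_singleton_of_mem hx, hCcard C hC]
      omega
    have hNi : N.Indep (C \ {x}) := hC.indep.subset diff_subset
    have := (htr (C \ {x})).2 ⟨hNi, le_of_eq hcard⟩
    exact ⟨this.1, this.2, hcard⟩
  have hCspanx : ∀ C ∈ 𝒞, ∀ x ∈ C, M.closure (C \ {x}) = F := by
    intro C hC x hx
    obtain ⟨h1, h2, h3⟩ := hCdel C hC x hx
    exact hspan _ h1 h2 h3
  have hCdep : ∀ C ∈ 𝒞, M.Dep C := by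
    intro C hC
    rw [dep_iff]
    refine ⟨fun hi => ?_, (hCsub C hC).trans hFE⟩
    have := hub C hi (hCsub C hC)
    rw [hCcard C hC] at this
    omega
  have hCne : ∀ C ∈ 𝒞, C.Nonempty := by
    intro C hC
    apply Set.nonempty_of_ncard_ne_zero
    rw [hCcard C hC]
    omega
  have hCspan : ∀ C ∈ 𝒞, M.closure C = F := by
    intro C hC
    obtain ⟨x, hx⟩ := hCne C hC
    refine subset_antisymm ?_ ?_
    · rw [← hclF]; exact M.closure_subset_closure (hCsub C hC)
    · rw [← hCspanx C hC x hx]; exact M.closure_subset_closure diff_subset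
  have hCnl : ∀ C ∈ 𝒞, C ⊆ M.E \ L := by
    intro C hC x hx
    have hne : (C \ {x}).Nonempty := by
      apply Set.nonempty_of_ncard_ne_zero
      rw [(hCdel C hC x hx).2.2]
      omega
    obtain ⟨x', hx'⟩ := hne
    have hxmem : x ∈ C \ {x'} := ⟨hx, by simp; rintro rfl; exact hx'.2 rfl⟩
    exact indep_subset_nonloops (hCdel C hC x' hx'.1).1 hxmem
  have h𝒞fin : 𝒞.Finite := hFfin.finite_subsets.subset (fun C hC => hCsub C hC)
  -- counting bases of N
  have h𝒞count : (F \ L).ncard ≤ 𝒞.ncard + k := by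
    obtain ⟨B₀, hB₀⟩ := N.exists_isBase
    have hB₀𝒞 : B₀ ∈ 𝒞 := hB₀
    have hnlN : ∀ x ∈ F \ L, N.Indep {x} := by
      intro x hx
      have hxi : M.Indep {x} := singleton_indep_iff.2 ⟨hFE hx.1, hx.2⟩
      have := (htr {x}).1 ⟨hxi, by simpa using hx.1⟩
      exact this.1
    have hB₀nl : B₀ ⊆ F \ L := fun x hx => ⟨hCsub B₀ hB₀𝒞 hx, (hCnl B₀ hB₀𝒞 hx).2⟩
    have hchoice : ∀ e ∈ (F \ L) \ B₀, ∃ B', N.IsBase B' ∧ e ∈ B' ∧ B' ⊆ insert e B₀ := by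
      intro e he
      obtain ⟨B', hB', h1, h2⟩ := (hnlN e he.1).exists_isBase_subset_union_isBase hB₀
      exact ⟨B', hB', by simpa using h1, by simpa using h2⟩
    classical
    set g : α → Set α := fun e =>
      if he : e ∈ (F \ L) \ B₀ then (hchoice e he).choose else ∅ with hgdef
    have hg : ∀ e ∈ (F \ L) \ B₀, N.IsBase (g e) ∧ e ∈ g e ∧ g e ⊆ insert e B₀ := by
      intro e he
      rw [hgdef]
      simp only [dif_pos he]
      exact (hchoice e he).choose_spec
    have hsub2 : insert B₀ (g '' ((F \ L) \ B₀)) ⊆ 𝒞 := by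
      rintro C (rfl | ⟨e, he, rfl⟩)
      · exact hB₀𝒞
      · exact (hg e he).1
    have hinj : Set.InjOn g ((F \ L) \ B₀) := by
      intro e he e' he' heq
      have h1 := (hg e' he').2.1
      rw [← heq] at h1
      have := (hg e he).2.2 h1
      rcases this with h | h
      · exact h.symm
      · exact absurd h he'.2
    have hB₀notin : B₀ ∉ g '' ((F \ L) \ B₀) := by
      rintro ⟨e, he, heq⟩
      exact he.2 (heq ▸ (hg e he).2.1)
    have himgfin : (g '' ((F \ L) \ B₀)).Finite := ((hFfin.diff).diff).image g
    have hcard1 : (insert B₀ (g '' ((F \ L) \ B₀))).ncard =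
        ((F \ L) \ B₀).ncard + 1 := by
      rw [Set.ncard_insert_of_notMem hB₀notin himgfin, Set.ncard_image_of_injOn hinj]
    have hcard2 : ((F \ L) \ B₀).ncard + B₀.ncard = (F \ L).ncard :=
      Set.ncard_diff_add_ncard_of_subset hB₀nl (hFfin.diff)
    have hB₀card : B₀.ncard = k + 1 := hNb B₀ hB₀
    have hle : (insert B₀ (g '' ((F \ L) \ B₀))).ncard ≤ 𝒞.ncard :=
      Set.ncard_le_ncard hsub2 h𝒞fin
    omega
  -- extend I₀ to a base of M
  obtain ⟨B₁, hB₁, hI₀B₁⟩ := hI₀.indep.exists_isBase_superset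
  have hB₁card : B₁.ncard = r := (mrk_eq_base hB₁).symm
  have hB₁fin : B₁.Finite := hE.subset hB₁.subset_ground
  have hdiffF : ∀ B, M.Indep B → I₀ ⊆ B → ∀ x ∈ B \ I₀, x ∉ F := by
    intro B hBi hIB x hx hxF
    have hxI : x ∉ I₀ := hx.2
    have hins : M.Indep (insert x I₀) := hBi.subset (insert_subset hx.1 hIB)
    have hcard : (insert x I₀).ncard = k + 1 := by
      rw [Set.ncard_insert_of_notMem hxI (hE.subset (hI₀.indep.subset_ground)), hI₀card]
    have := hub _ hins (insert_subset hxF hI₀F)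
    omega
  set K := B₁ \ I₀ with hKdef
  have hKcard : K.ncard + k = r := by
    rw [hKdef, Set.ncard_diff hI₀B₁ (hB₁fin.subset hI₀B₁), hI₀card, hB₁card]
    have : I₀.ncard ≤ B₁.ncard := Set.ncard_le_ncard hI₀B₁ hB₁fin
    omega
  have hKE : K ⊆ M.E := diff_subset.trans hB₁.subset_ground
  have hKF : ∀ x ∈ K, x ∉ F := fun x hx => hdiffF B₁ hB₁.indep hI₀B₁ x hx
  have hKEF : K ⊆ M.E \ F := fun x hx => ⟨hKE hx, hKF x hx⟩
  -- the family of independent complements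
  set 𝒥 := {J : Set α | J ⊆ M.E ∧ J ∩ F = ∅ ∧ M.Indep (I₀ ∪ J) ∧ J.ncard + (k+1) = r}
    with h𝒥def
  have h𝒥fin : 𝒥.Finite := hE.finite_subsets.subset (fun J hJ => hJ.1)
  have h𝒥emp : k + 1 = r → ∅ ∈ 𝒥 := by
    intro hkr1
    refine ⟨empty_subset _, by simp, by simpa using hI₀.indep, by simpa using hkr1⟩
  have h𝒥count : k + 2 ≤ r → (M.E \ F).ncard ≤ 𝒥.ncard := by
    intro hk2
    -- inner family : subsets of K of size |K| - 1
    have hKfin : K.Finite := hB₁fin.subset diff_subset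
    have hinner : ∀ x ∈ K, K \ {x} ∈ 𝒥 := by
      intro x hx
      refine ⟨diff_subset.trans hKE, ?_, ?_, ?_⟩
      · apply Set.eq_empty_of_forall_notMem
        rintro y ⟨hy1, hy2⟩
        exact hKF y hy1.1 hy2
      · exact hB₁.indep.subset (union_subset hI₀B₁ (diff_subset.trans diff_subset))
      · rw [Set.ncard_diff_singleton_of_mem hx]
        omega
    have hinnerinj : Set.InjOn (fun x => K \ {x}) K := by
      intro x hx y hy heq
      have heq' : K \ {x} = K \ {y} := heq
      by_contra hne
      have hxy : x ∈ K \ {y} := ⟨hx, by simpa using hne⟩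
      rw [← heq'] at hxy
      exact hxy.2 rfl
    -- outer family
    have houter : ∀ e ∈ (M.E \ F) \ K, ∃ J, J ∈ 𝒥 ∧ e ∈ J ∧ J ∩ (M.E \ ↑B₁) = {e} := by
      intro e he
      have heI₀ : e ∉ I₀ := fun h => he.1.2 (hI₀F h)
      have heB₁ : e ∉ B₁ := by
        intro h
        rcases (em (e ∈ I₀)) with h' | h'
        · exact heI₀ h'
        · exact he.2 ⟨h, h'⟩
      have hins : M.Indep (insert e I₀) := by
        rw [hI₀.indep.insert_indep_iff]
        exact Or.inl ⟨he.1.1, by rw [hclI₀]; exact he.1.2⟩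
      obtain ⟨B', hB', hsub1, hsub2⟩ := hins.exists_isBase_subset_union_isBase hB₁
      have hB'fin : B'.Finite := hE.subset hB'.subset_ground
      have hI₀B' : I₀ ⊆ B' := (subset_insert _ _).trans hsub1
      have heB' : e ∈ B' := hsub1 (mem_insert _ _)
      have hB'card : B'.ncard = r := (mrk_eq_base hB').symm
      have hBI₀card : (B' \ I₀).ncard + k = r := by
        rw [Set.ncard_diff hI₀B' (hB'fin.subset hI₀B'), hI₀card, hB'card]
        have : I₀.ncard ≤ B'.ncard := Set.ncard_le_ncard hI₀B' hB'fin
        omega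
      have heBI : e ∈ B' \ I₀ := ⟨heB', heI₀⟩
      have hzne : ((B' \ I₀) \ {e}).Nonempty := by
        apply Set.nonempty_of_ncard_ne_zero
        rw [Set.ncard_diff_singleton_of_mem heBI]
        omega
      obtain ⟨z, hz⟩ := hzne
      refine ⟨(B' \ I₀) \ {z}, ⟨?_, ?_, ?_, ?_⟩, ⟨heBI, by simp; rintro rfl; exact hz.2 rfl⟩, ?_⟩
      · exact diff_subset.trans (diff_subset.trans hB'.subset_ground)
      · apply Set.eq_empty_of_forall_notMem
        rintro y ⟨hy1, hy2⟩
        exact hdiffF B' hB'.indep hI₀B' y hy1.1 hy2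
      · exact hB'.indep.subset (union_subset hI₀B' (diff_subset.trans diff_subset))
      · rw [Set.ncard_diff_singleton_of_mem hz.1]
        omega
      · -- J ∩ (E \ B₁) = {e}
        apply subset_antisymm
        · rintro y ⟨⟨hy1, hy2⟩, hy3⟩
          rcases hsub2 hy1.1 with h | h
          · rcases (by simpa using h : y = e ∨ y ∈ I₀) with h' | h'
            · exact h'
            · exact absurd h' hy1.2
          · exact absurd h hy3.2
        · rintro y (rfl : y = e)
          exact ⟨⟨heBI, by simp; rintro rfl; exact hz.2 rfl⟩, he.1.1, heB₁⟩
    classical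
    set g2 : α → Set α := fun e =>
      if he : e ∈ (M.E \ F) \ K then (houter e he).choose else ∅ with hg2def
    have hg2 : ∀ e ∈ (M.E \ F) \ K, g2 e ∈ 𝒥 ∧ e ∈ g2 e ∧ g2 e ∩ (M.E \ ↑B₁) = {e} := by
      intro e he
      rw [hg2def]
      simp only [dif_pos he]
      exact (houter e he).choose_spec
    have hg2inj : Set.InjOn g2 ((M.E \ F) \ K) := by
      intro e he e' he' heq
      have h1 : e' ∈ g2 e ∩ (M.E \ B₁) := by
        rw [heq]
        refine ⟨(hg2 e' he').2.1, he'.1.1, ?_⟩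
        intro hmem
        rcases (em (e' ∈ I₀)) with h' | h'
        · exact he'.1.2 (hI₀F h')
        · exact he'.2 ⟨hmem, h'⟩
      rw [(hg2 e he).2.2] at h1
      exact (h1.symm : e = e')
    have hdisj12 : Disjoint ((fun x => K \ {x}) '' K) (g2 '' ((M.E \ F) \ K)) := by
      rw [Set.disjoint_left]
      rintro J ⟨x, hx, rfl⟩ ⟨e, he, heq⟩
      have he1 : e ∈ g2 e := (hg2 e he).2.1
      rw [heq] at he1
      exact he.2 he1.1
    have hcount1 : ((fun x => K \ {x}) '' K).ncard = K.ncard :=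
      Set.ncard_image_of_injOn hinnerinj
    have hcount2 : (g2 '' ((M.E \ F) \ K)).ncard = ((M.E \ F) \ K).ncard :=
      Set.ncard_image_of_injOn hg2inj
    have hsubun : ((fun x => K \ {x}) '' K) ∪ (g2 '' ((M.E \ F) \ K)) ⊆ 𝒥 := by
      rintro J (⟨x, hx, rfl⟩ | ⟨e, he, rfl⟩)
      · exact hinner x hx
      · exact (hg2 e he).1
    have hfin1 : ((fun x => K \ {x}) '' K).Finite := hKfin.image _
    have hfin2 : (g2 '' ((M.E \ F) \ K)).Finite := ((hE.diff).diff).image _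
    have huncard : (((fun x => K \ {x}) '' K) ∪ (g2 '' ((M.E \ F) \ K))).ncard =
        K.ncard + ((M.E \ F) \ K).ncard := by
      rw [Set.ncard_union_eq hdisj12 hfin1 hfin2, hcount1, hcount2]
    have hle : (((fun x => K \ {x}) '' K) ∪ (g2 '' ((M.E \ F) \ K))).ncard ≤ 𝒥.ncard :=
      Set.ncard_le_ncard hsubun h𝒥fin
    have hKcard2 : ((M.E \ F) \ K).ncard + K.ncard = (M.E \ F).ncard :=
      Set.ncard_diff_add_ncard_of_subset hKEF (hE.diff)
    omega
  -- finiteness of the pair sets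
  have h𝒜fin : {X : Set α | X ⊆ M.E \ L ∧ X.ncard = r}.Finite :=
    (hE.diff).finite_subsets.subset (fun X hX => hX.1)
  have hΩfin : (pairs {X : Set α | X ⊆ M.E \ L ∧ X.ncard = r}).Finite :=
    pairs_finite h𝒜fin (fun X hX => (hE.diff).subset hX.1)
  have hSSfin : (SS M r F).Finite := hΩfin.subset (SS_subset_pairs M r F)
  have hSDfin : (SD M r F).Finite := hSSfin.subset subset_union_left
  have hSIfin : (SI M r F).Finite := hSSfin.subset subset_union_right
  -- properties of the dependent sets C ∪ J
  have hXfacts : ∀ C ∈ 𝒞, ∀ J ∈ 𝒥,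
      (C ∪ J).ncard = r ∧ M.Dep (C ∪ J) ∧ (C ∪ J) ⊆ M.E \ L ∧ CXs M (C ∪ J) = C := by
    intro C hC J hJ
    have hCf := hCfin C hC
    have hJE : J ⊆ M.E := hJ.1
    have hJfin : J.Finite := hE.subset hJE
    have hJF : J ∩ F = ∅ := hJ.2.1
    have hdisj : Disjoint C J := by
      rw [Set.disjoint_left]
      intro x hxC hxJ
      exact (Set.eq_empty_iff_forall_notMem.1 hJF) x ⟨hxJ, hCsub C hC hxC⟩
    have hcard : (C ∪ J).ncard = r := by
      rw [Set.ncard_union_eq hdisj hCf hJfin, hCcard C hC]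
      have := hJ.2.2.2
      omega
    have hXE : C ∪ J ⊆ M.E := union_subset ((hCsub C hC).trans hFE) hJE
    have hdep : M.Dep (C ∪ J) := (hCdep C hC).superset subset_union_left hXE
    have hJnl : J ⊆ M.E \ L := indep_subset_nonloops (hJ.2.2.1.subset subset_union_right)
    have hXnl : C ∪ J ⊆ M.E \ L := union_subset (hCnl C hC) hJnl
    have hCX : CXs M (C ∪ J) = C := by
      ext x
      constructor
      · rintro ⟨hxX, hxI⟩
        rcases hxX with hxC | hxJ
        · exact hxC
        · exfalso
          have hCsubdel : C ⊆ (C ∪ J) \ {x} := by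
            intro y hy
            exact ⟨Or.inl hy, by rintro rfl; exact (Set.disjoint_left.1 hdisj) hy hxJ⟩
          exact (hCdep C hC).not_indep (hxI.subset hCsubdel)
      · intro hxC
        have hxJ : x ∉ J := Set.disjoint_left.1 hdisj hxC
        refine ⟨Or.inl hxC, ?_⟩
        have hsetid : (C ∪ J) \ {x} = (C \ {x}) ∪ J := by
          rw [Set.union_diff_distrib, Set.diff_singleton_eq_self hxJ]
        rw [hsetid]
        have h1 := hCdel C hC x hxC
        refine swap_indep hE hJ.2.2.1 h1.1 ?_ ?_ ?_ ?_
        · rw [hCspanx C hC x hxC, hclI₀]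
        · rw [h1.2.2, hI₀card]
        · rw [Set.disjoint_left]
          intro y hyI₀ hyJ
          exact (Set.eq_empty_iff_forall_notMem.1 hJF) y ⟨hyJ, hI₀F hyI₀⟩
        · rw [Set.disjoint_left]
          intro y hy1 hyJ
          exact Set.disjoint_left.1 hdisj hy1.1 hyJ
    exact ⟨hcard, hdep, hXnl, hCX⟩
  -- the family of dependent sets
  set 𝒳 := (fun p : Set α × Set α => p.1 ∪ p.2) '' (𝒞 ×ˢ 𝒥) with h𝒳def
  have h𝒳inj : Set.InjOn (fun p : Set α × Set α => p.1 ∪ p.2) (𝒞 ×ˢ 𝒥) := by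
    rintro ⟨C, J⟩ hp ⟨C', J'⟩ hq heq
    have hp' : C ∈ 𝒞 ∧ J ∈ 𝒥 := Set.mem_prod.1 hp
    have hq' : C' ∈ 𝒞 ∧ J' ∈ 𝒥 := Set.mem_prod.1 hq
    have heq' : C ∪ J = C' ∪ J' := heq
    have hrecover : ∀ C'' J'', C'' ∈ 𝒞 → J'' ∈ 𝒥 → (C'' ∪ J'') ∩ F = C'' := by
      intro C'' J'' hC'' hJ''
      apply subset_antisymm
      · rintro y ⟨hy1 | hy1, hy2⟩
        · exact hy1
        · exact absurd (Set.eq_empty_iff_forall_notMem.1 hJ''.2.1 y ⟨hy1, hy2⟩) not_false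
      · intro y hy
        exact ⟨Or.inl hy, hCsub C'' hC'' hy⟩
    have hCeq : C = C' := by
      rw [← hrecover C J hp'.1 hp'.2, ← hrecover C' J' hq'.1 hq'.2, heq']
    have hJeq : J = J' := by
      have h1 : ∀ C'' J'', C'' ∈ 𝒞 → J'' ∈ 𝒥 → (C'' ∪ J'') \ F = J'' := by
        intro C'' J'' hC'' hJ''
        apply subset_antisymm
        · rintro y ⟨hy1 | hy1, hy2⟩
          · exact absurd (hCsub C'' hC'' hy1) hy2
          · exact hy1
        · intro y hy
          refine ⟨Or.inr hy, fun hyF => ?_⟩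
          exact (Set.eq_empty_iff_forall_notMem.1 hJ''.2.1) y ⟨hy, hyF⟩
      rw [← h1 C J hp'.1 hp'.2, ← h1 C' J' hq'.1 hq'.2, heq']
    rw [Prod.ext_iff]
    exact ⟨hCeq, hJeq⟩
  have h𝒳card : 𝒳.ncard = 𝒞.ncard * 𝒥.ncard := by
    rw [h𝒳def, Set.ncard_image_of_injOn h𝒳inj, ncard_sprod h𝒞fin h𝒥fin]
  have h𝒳fin : 𝒳.Finite := (h𝒞fin.prod h𝒥fin).image _
  have h𝒳m : ∀ X ∈ 𝒳, X.Finite ∧ X.ncard = r := by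
    rintro X ⟨⟨C, J⟩, hp, rfl⟩
    have hp' : C ∈ 𝒞 ∧ J ∈ 𝒥 := Set.mem_prod.1 hp
    have h1 := hXfacts C hp'.1 J hp'.2
    exact ⟨hE.subset (h1.2.2.1.trans diff_subset), h1.1⟩
  have hSD1 : pairs 𝒳 ⊆ SD M r F := by
    rintro ⟨X, y⟩ ⟨hX, hy⟩
    obtain ⟨⟨C, J⟩, hp, rfl⟩ := hX
    have hp' : C ∈ 𝒞 ∧ J ∈ 𝒥 := Set.mem_prod.1 hp
    obtain ⟨h1, h2, h3, h4⟩ := hXfacts C hp'.1 J hp'.2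
    exact ⟨hy, h3, h1, h2, by rw [h4]; exact hCspan C hp'.1⟩
  have hSDge : 𝒞.ncard * 𝒥.ncard * r ≤ (SD M r F).ncard := by
    have := pairs_ncard h𝒳fin h𝒳m
    rw [h𝒳card] at this
    rw [← this]
    exact Set.ncard_le_ncard hSD1 hSDfin
  -- lower bound for SI (used when k + 1 = r)
  obtain ⟨C₀, hC₀⟩ := N.exists_isBase
  have hC₀𝒞 : C₀ ∈ 𝒞 := hC₀
  set ℬ := (fun x => C₀ \ {x}) '' C₀ with hℬdef
  have hℬinj : Set.InjOn (fun x => C₀ \ {x}) C₀ := by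
    intro x hx y hy heq
    have heq' : C₀ \ {x} = C₀ \ {y} := heq
    by_contra hne
    have hxy : x ∈ C₀ \ {y} := ⟨hx, by simpa using hne⟩
    rw [← heq'] at hxy
    exact hxy.2 rfl
  have hℬcard : ℬ.ncard = k + 1 := by
    rw [hℬdef, Set.ncard_image_of_injOn hℬinj, hCcard C₀ hC₀𝒞]
  have hSI1 : k + 1 = r → ∀ I ∈ ℬ, ∀ y ∈ M.E \ F, (insert y I, y) ∈ SI M r F ∧ y ∉ I := by
    intro hk1r
    rintro I ⟨x, hx, rfl⟩ y hy
    have h1 := hCdel C₀ hC₀𝒞 x hx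
    have hyI : y ∉ C₀ \ {x} := fun h => hy.2 (h1.2.1 h)
    have hind : M.Indep (insert y (C₀ \ {x})) := by
      rw [h1.1.insert_indep_iff]
      exact Or.inl ⟨hy.1, by rw [hCspanx C₀ hC₀𝒞 x hx]; exact hy.2⟩
    have hcard : (insert y (C₀ \ {x})).ncard = r := by
      rw [Set.ncard_insert_of_notMem hyI ((hCfin C₀ hC₀𝒞).diff), h1.2.2]
      omega
    refine ⟨⟨mem_insert _ _, hcard, hind, ?_⟩, hyI⟩
    have : insert y (C₀ \ {x}) \ {y} = C₀ \ {x} := by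
      rw [Set.insert_diff_self_of_notMem hyI]
    rw [this]
    exact hCspanx C₀ hC₀𝒞 x hx
  have hSIk : k + 1 = r → (k + 1) * (M.E \ F).ncard ≤ (SI M r F).ncard := by
    intro hk1r
    have hSI1 := hSI1 hk1r
    set φ : Set α × α → Set α × α := fun p => (insert p.2 p.1, p.2) with hφdef
    have hφsub : φ '' (ℬ ×ˢ (M.E \ F)) ⊆ SI M r F := by
      rintro p ⟨⟨I, y⟩, hp, rfl⟩
      have hp' := Set.mem_prod.1 hp
      exact (hSI1 I hp'.1 y hp'.2).1
    have hφinj : Set.InjOn φ (ℬ ×ˢ (M.E \ F)) := by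
      rintro ⟨I, y⟩ hp ⟨I', y'⟩ hq heq
      have hp' := Set.mem_prod.1 hp
      have hq' := Set.mem_prod.1 hq
      have h1 : (insert y I, y) = (insert y' I', y') := heq
      have hyy : y = y' := (Prod.ext_iff.1 h1).2
      subst hyy
      have h2 : insert y I = insert y I' := (Prod.ext_iff.1 h1).1
      have hyI : y ∉ I := (hSI1 I hp'.1 y hp'.2).2
      have hyI' : y ∉ I' := (hSI1 I' hq'.1 y hq'.2).2
      rw [Prod.ext_iff]
      refine ⟨?_, rfl⟩
      have := congrArg (fun S => S \ ({y} : Set α)) h2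
      simpa [Set.insert_diff_self_of_notMem hyI, Set.insert_diff_self_of_notMem hyI'] using this
    have hprodfin : (ℬ ×ˢ (M.E \ F)).Finite :=
      (((hCfin C₀ hC₀𝒞).image _).prod (hE.diff))
    have h2 : (φ '' (ℬ ×ˢ (M.E \ F))).ncard = (k+1) * (M.E \ F).ncard := by
      rw [Set.ncard_image_of_injOn hφinj,
        ncard_sprod ((hCfin C₀ hC₀𝒞).image _) (hE.diff), hℬcard]
    rw [← h2]
    exact Set.ncard_le_ncard hφsub hSIfin
  -- assembling the bound
  have hSScard : (SD M r F).ncard + (SI M r F).ncard = (SS M r F).ncard := by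
    rw [SS, Set.ncard_union_eq ?_ hSDfin hSIfin]
    rw [Set.disjoint_left]
    rintro ⟨X, y⟩ ⟨_, _, _, hdep, _⟩ ⟨_, _, hind, _⟩
    exact hdep.not_indep hind
  have hm1 : 1 ≤ (M.E \ F).ncard := by
    rw [Nat.one_le_iff_ne_zero]
    intro h0
    have hEF : M.E \ F = ∅ := (Set.ncard_eq_zero (hE.diff)).1 h0
    have hFeqE : F = M.E := subset_antisymm hFE (by
      intro x hx
      by_contra hxF
      exact (Set.eq_empty_iff_forall_notMem.1 hEF) x ⟨hx, hxF⟩)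
    have : M.IsBase I₀ := by
      rw [← isBasis_ground_iff, ← hFeqE]
      exact hI₀
    have := mrk_eq_base this
    rw [hI₀card] at this
    omega
  have hA1 : 1 ≤ 𝒞.ncard := (Set.ncard_pos h𝒞fin).2 ⟨C₀, hC₀𝒞⟩
  have hsplit : (M.E \ L).ncard = (F \ L).ncard + (M.E \ F).ncard := by
    have hLE' : L ⊆ M.E := M.closure_subset_ground ∅
    have hset : M.E \ L = (F \ L) ∪ (M.E \ F) := by
      ext x
      constructor
      · rintro ⟨hx1, hx2⟩
        rcases em (x ∈ F) with h | h
        · exact Or.inl ⟨h, hx2⟩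
        · exact Or.inr ⟨hx1, h⟩
      · rintro (⟨hx1, hx2⟩ | ⟨hx1, hx2⟩)
        · exact ⟨hFE hx1, hx2⟩
        · exact ⟨hx1, fun hl => hx2 (hLF hl)⟩
    rw [hset, Set.ncard_union_eq ?_ (hFfin.diff) (hE.diff)]
    rw [Set.disjoint_left]
    rintro x ⟨hx1, _⟩ ⟨_, hx2⟩
    exact hx2 hx1
  set A := 𝒞.ncard
  set Bc := 𝒥.ncard
  set m := (M.E \ F).ncard
  set f' := (F \ L).ncard
  rcases Nat.lt_or_ge (k+1) r with hcase | hcase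
  · -- low rank case : k + 2 ≤ r
    have hBm : m ≤ Bc := h𝒥count (by omega)
    have hBc1 : 1 ≤ Bc := le_trans hm1 hBm
    have hmul : A + Bc ≤ A * Bc + 1 := nat_add_le_mul hA1 hBc1
    have hkey : f' + m + 1 ≤ A * Bc + r := by
      have s1 : f' + m + 1 ≤ A + k + Bc + 1 := by omega
      have s3 : A * Bc + 1 + k + 1 ≤ A * Bc + r := by linarith
      linarith
    have hSDle : (SD M r F).ncard ≤ (SS M r F).ncard :=
      Set.ncard_le_ncard subset_union_left hSSfin
    calc r * ((M.E \ L).ncard + 1) = r * (f' + m + 1) := by rw [hsplit]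
    _ ≤ r * (A * Bc + r) := Nat.mul_le_mul_left _ hkey
    _ = A * Bc * r + r * r := by ring
    _ ≤ (SS M r F).ncard + r * r := by
        have := le_trans hSDge hSDle
        linarith
  · -- hyperplane case : k + 1 = r
    have hk1r : k + 1 = r := by omega
    have hBc1 : 1 ≤ Bc := (Set.ncard_pos h𝒥fin).2 ⟨∅, h𝒥emp hk1r⟩
    have hSIge := hSIk hk1r
    have hSSge : A * Bc * r + (k+1) * m ≤ (SS M r F).ncard := by linarith
    have hkey : f' + m + 1 ≤ A + m + r := by omega
    calc r * ((M.E \ L).ncard + 1) = r * (f' + m + 1) := by rw [hsplit]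
    _ ≤ r * (A + m + r) := Nat.mul_le_mul_left _ hkey
    _ = A * 1 * r + r * m + r * r := by ring
    _ ≤ A * Bc * r + (k+1) * m + r * r := by
        have h1 : A * 1 * r ≤ A * Bc * r :=
          Nat.mul_le_mul_right r (Nat.mul_le_mul_left A hBc1)
        have h2 : r * m = (k+1) * m := by rw [hk1r]
        linarith
    _ ≤ (SS M r F).ncard + r * r := by linarith

end PerFlat

end EssProofAux

open EssProofAux

/-- For r ≥ 3 and n ≥ 2r, a matroid of rank r on n elements has at most
(1/(n−r+1))·C(n,r) essential flats of rank less than r. -/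
theorem essential_flats_bound {α : Type*} (M : Matroid α) (n r : ℕ)
    (hE : M.E.Finite) (hn : M.E.ncard = n) (hrk : mrk M = r)
    (hr : 3 ≤ r) (h2r : 2 * r ≤ n) :
    ({F : Set α | IsEssentialFlat M F ∧ mrnk M F < r}.ncard : ℝ) ≤
      (1 / ((n : ℝ) - r + 1)) * (n.choose r : ℝ) := by
  classical
  have hnr : r ≤ n := by omega
  set L := M.closure ∅ with hLdef
  have hLE : L ⊆ M.E := M.closure_subset_ground ∅
  have hLfin : L.Finite := hE.subset hLE
  set t := L.ncard with htdef
  set n' := (M.E \ L).ncard with hn'def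
  set Ess := {F : Set α | IsEssentialFlat M F ∧ mrnk M F < r} with hEssdef
  have hEssfin : Ess.Finite :=
    hE.finite_subsets.subset (fun F hF => hF.1.1.subset_ground)
  set Ess1 := {F ∈ Ess | 1 ≤ mrnk M F} with hEss1def
  have hEss1fin : Ess1.Finite := hEssfin.subset (fun F hF => hF.1)
  -- the budget of (set, element) pairs
  set 𝒜 := {X : Set α | X ⊆ M.E \ L ∧ X.ncard = r} with h𝒜def
  have h𝒜fin : 𝒜.Finite := (hE.diff).finite_subsets.subset (fun X hX => hX.1)
  have hΩfin : (pairs 𝒜).Finite :=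
    pairs_finite h𝒜fin (fun X hX => (hE.diff).subset hX.1)
  have hΩcard : (pairs 𝒜).ncard = n'.choose r * r := by
    rw [pairs_ncard h𝒜fin (fun X hX => ⟨(hE.diff).subset hX.1, hX.2⟩),
      h𝒜def, ncard_subsets_card (hE.diff) r]
  -- per flat lower bound
  set q := r * (n' + 1) - r * r with hqdef
  have hq : ∀ F ∈ Ess1, q ≤ (SS M r F).ncard := by
    rintro F ⟨⟨hFess, hklt⟩, hk1⟩
    have h := SS_lower hE hFess hk1 (by rw [hrk]; exact hklt)
    rw [hrk, ← hLdef, ← hn'def] at h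
    rw [hqdef]
    exact Nat.sub_le_iff_le_add.2 h
  have hbound1 : Ess1.ncard * q ≤ n'.choose r * r := by
    rw [← hΩcard]
    refine family_ncard_bound hEss1fin (SS M r) (pairs 𝒜) hΩfin ?_ ?_ hq
    · intro F _
      exact SS_subset_pairs M r F
    · intro F _ F' _ hne
      exact SS_disjoint M r hne
  -- n' is at least r
  obtain ⟨B₀, hB₀⟩ := M.exists_isBase
  have hB₀card : B₀.ncard = r := by rw [← hrk]; exact (mrk_eq_base hB₀).symm
  have hrn' : r ≤ n' := by
    rw [← hB₀card]
    exact Set.ncard_le_ncard (indep_subset_nonloops hB₀.indep) (hE.diff)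
  -- remove the multiplicity r
  have hqeq2 : q = r * (n' + 1 - r) := by
    have h2 : r * (n' + 1 - r) + r * r = r * (n' + 1) := by
      rw [← Nat.mul_add]
      congr 1
      omega
    rw [hqdef, ← h2, Nat.add_sub_cancel]
  have hE1 : Ess1.ncard * (n' + 1 - r) ≤ n'.choose r := by
    have h1 : r * (Ess1.ncard * (n' + 1 - r)) ≤ r * n'.choose r := by
      calc r * (Ess1.ncard * (n' + 1 - r)) = Ess1.ncard * (r * (n' + 1 - r)) := by ring
      _ = Ess1.ncard * q := by rw [hqeq2]
      _ ≤ n'.choose r * r := hbound1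
      _ = r * n'.choose r := by ring
    exact Nat.le_of_mul_le_mul_left h1 (by omega)
  -- essential flats of rank zero
  have hEssSub : Ess ⊆ insert L Ess1 := by
    intro F hF
    rcases Nat.lt_or_ge (mrnk M F) 1 with h1 | h1
    · left
      have hFlat := hF.1.1
      have hLsubF : L ⊆ F := by
        rw [hLdef, ← hFlat.closure]
        exact M.closure_subset_closure (empty_subset F)
      refine subset_antisymm ?_ hLsubF
      intro x hxF
      by_contra hxL
      have hxi : M.Indep {x} := singleton_indep_iff.2 ⟨hFlat.subset_ground hxF, hxL⟩
      have h2 := indep_ncard_le_mrnk hE hxi (by simpa using hxF) hFlat.subset_ground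
      rw [Set.ncard_singleton] at h2
      omega
    · right
      exact ⟨hF, h1⟩
  have hnsplit : n' + t = n := by
    rw [htdef, hn'def, ← hn]
    exact Set.ncard_diff_add_ncard_of_subset hLE hE
  -- the master inequality over ℕ
  have hmaster : Ess.ncard * (n - r + 1) ≤ n.choose r := by
    rcases Nat.eq_zero_or_pos t with ht0 | ht1
    · -- no loops
      have hLemp : L = ∅ := (Set.ncard_eq_zero hLfin).1 ht0
      have hLnot : L ∉ Ess := by
        rintro ⟨⟨_, N, hNE, hNrk, _, _⟩, _⟩
        obtain ⟨B, hB⟩ := N.exists_isBase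
        have hBemp : B = ∅ := by
          have h3 := hB.subset_ground
          rw [hNE, hLemp] at h3
          exact Set.subset_empty_iff.1 h3
        have h4 := mrk_eq_base hB
        rw [hBemp, Set.ncard_empty] at h4
        omega
      have hsub : Ess ⊆ Ess1 := by
        intro F hF
        rcases (em (F = L)) with rfl | hne
        · exact absurd hF hLnot
        · rcases hEssSub hF with h | h
          · exact absurd h hne
          · exact h
      have hn'n : n' = n := by omega
      have h1 : Ess.ncard ≤ Ess1.ncard := Set.ncard_le_ncard hsub hEss1fin
      have h2 : n - r + 1 = n' + 1 - r := by omega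
      rw [h2, ← hn'n]
      calc Ess.ncard * (n' + 1 - r) ≤ Ess1.ncard * (n' + 1 - r) :=
        Nat.mul_le_mul_right _ h1
      _ ≤ n'.choose r := hE1
    · -- loops exist
      have hn'lt : n' ≤ n - 1 := by omega
      have hrE1 : r * Ess1.ncard ≤ n'.choose (r - 1) := by
        have hid : n'.choose r * r = n'.choose (r-1) * (n' + 1 - r) := by
          have h5 := Nat.choose_succ_right_eq n' (r - 1)
          have hr1 : r - 1 + 1 = r := by omega
          rw [hr1] at h5
          rw [h5]
          congr 1
          omega
        have h1 : (r * Ess1.ncard) * (n' + 1 - r) ≤ n'.choose (r-1) * (n' + 1 - r) := by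
          calc (r * Ess1.ncard) * (n' + 1 - r) = r * (Ess1.ncard * (n' + 1 - r)) := by ring
          _ ≤ r * n'.choose r := Nat.mul_le_mul_left _ hE1
          _ = n'.choose r * r := by ring
          _ = n'.choose (r-1) * (n' + 1 - r) := hid
        exact Nat.le_of_mul_le_mul_right h1 (by omega)
      have hstep3 : n'.choose (r-1) ≤ (n-1).choose (r-1) := Nat.choose_le_choose _ hn'lt
      have hstep4 : r ≤ (n-1).choose (r-2) := by
        have h1 := choose_lower (n-1) (r-2) (by omega) (by omega)
        omega
      have hpascal : (n-1).choose (r-2) + (n-1).choose (r-1) = n.choose (r-1) := by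
        obtain ⟨a, ha⟩ : ∃ a, n = a + 1 := ⟨n - 1, by omega⟩
        obtain ⟨b, hb⟩ : ∃ b, r = b + 2 := ⟨r - 2, by omega⟩
        subst ha hb
        have h6 := Nat.choose_succ_succ' a b
        have h1 : a + 1 - 1 = a := by omega
        have h2 : b + 2 - 2 = b := by omega
        have h3 : b + 2 - 1 = b + 1 := by omega
        rw [h1, h2, h3, h6]
      have hEcard : Ess.ncard ≤ Ess1.ncard + 1 := by
        calc Ess.ncard ≤ (insert L Ess1).ncard :=
          Set.ncard_le_ncard hEssSub (hEss1fin.insert L)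
        _ ≤ Ess1.ncard + 1 := Set.ncard_insert_le _ _
      have hrE : r * Ess.ncard ≤ n.choose (r-1) := by
        calc r * Ess.ncard ≤ r * (Ess1.ncard + 1) := Nat.mul_le_mul_left _ hEcard
        _ = r * Ess1.ncard + r := by ring
        _ ≤ n'.choose (r-1) + r := by omega
        _ ≤ (n-1).choose (r-1) + (n-1).choose (r-2) := by omega
        _ = n.choose (r-1) := by omega
      have hid2 : n.choose r * r = n.choose (r-1) * (n - r + 1) := by
        have h5 := Nat.choose_succ_right_eq n (r - 1)
        have hr1 : r - 1 + 1 = r := by omega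
        rw [hr1] at h5
        rw [h5]
        congr 1
        omega
      have h1 : (Ess.ncard * (n - r + 1)) * r ≤ n.choose r * r := by
        calc (Ess.ncard * (n - r + 1)) * r = (r * Ess.ncard) * (n - r + 1) := by ring
        _ ≤ n.choose (r-1) * (n - r + 1) := Nat.mul_le_mul_right _ hrE
        _ = n.choose r * r := hid2.symm
      exact Nat.le_of_mul_le_mul_right h1 (by omega)
  -- pass to the reals
  have hpos : (0 : ℝ) < (n : ℝ) - r + 1 := by
    have h1 : (r : ℝ) ≤ n := by exact_mod_cast hnr
    linarith
  rw [div_mul_eq_mul_div, one_mul, le_div_iff₀ hpos]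
  have hcast : ((n - r + 1 : ℕ) : ℝ) = (n : ℝ) - r + 1 := by
    push_cast [Nat.cast_sub hnr]
    ring
  rw [← hcast]
  exact_mod_cast hmaster
end

section
/- Let 0 ≤ t ≤ r ≤ n, and let 𝓜 be a class of matroids that is closed under contraction and under isomorphism. Write \tilde m(n,r) for the number of members of 𝓜 with ground set {1,…,n} and rank r. Then log( \tilde m(n,r) + 1 ) ≤ ( C(n,r) / C(n−t, r−t) ) · log( \tilde m(n−t, r−t) + 1 ). -/
open Matroid Set Filter Real

namespace PavingEnum

/-- The contraction `M / C`, defined by duality from restriction. -/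
noncomputable def mcontract {α : Type*} (M : Matroid α) (C : Set α) : Matroid α :=
  (M✶ ↾ (M.E \ C))✶

/-- An isomorphism between matroids: a bijection between the ground sets
preserving independence. -/
def MatroidIso {α β : Type*} (M : Matroid α) (N : Matroid β) : Prop :=
  ∃ e : M.E ≃ N.E, ∀ I : Set M.E,
    M.Indep ((↑) '' I) ↔ N.Indep ((↑) '' (e '' I))

/-- The number of members of the class `𝓜` with ground set `{1, …, n}` and rank `r`. -/
noncomputable def classCount (𝓜 : ∀ ⦃α : Type⦄, Matroid α → Prop) (n r : ℕ) : ℕ :=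
  {M : Matroid (Fin n) | 𝓜 M ∧ M.E = Set.univ ∧ mrk M = r}.ncard

end PavingEnum

open PavingEnum


private lemma geom_add_le {J : Type*} (k : ℕ) (hk : 0 < k) (K : Finset J) (hK : K.card = k)
    (a b : J → ℝ) (ha : ∀ j ∈ K, 0 ≤ a j) (hb : ∀ j ∈ K, 0 ≤ b j) :
    (∏ j ∈ K, a j ^ ((k:ℝ)⁻¹)) + (∏ j ∈ K, b j ^ ((k:ℝ)⁻¹)) ≤
      ∏ j ∈ K, (a j + b j) ^ ((k:ℝ)⁻¹) := by
  have hkR : (0:ℝ) < (k:ℝ) := by exact_mod_cast hk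
  have hp0 : (0:ℝ) ≤ (k:ℝ)⁻¹ := by positivity
  have hpne : ((k:ℝ)⁻¹) ≠ 0 := by positivity
  by_cases h0 : ∃ j ∈ K, a j + b j = 0
  · obtain ⟨j0, hj0, h⟩ := h0
    have ha0 : a j0 = 0 := by nlinarith [ha j0 hj0, hb j0 hj0]
    have hb0 : b j0 = 0 := by nlinarith [ha j0 hj0, hb j0 hj0]
    have h1 : (∏ j ∈ K, a j ^ ((k:ℝ)⁻¹)) = 0 :=
      Finset.prod_eq_zero hj0 (by rw [ha0, Real.zero_rpow hpne])
    have h2 : (∏ j ∈ K, b j ^ ((k:ℝ)⁻¹)) = 0 :=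
      Finset.prod_eq_zero hj0 (by rw [hb0, Real.zero_rpow hpne])
    rw [h1, h2, add_zero]
    exact Finset.prod_nonneg fun j hj => Real.rpow_nonneg (add_nonneg (ha j hj) (hb j hj)) _
  · push_neg at h0
    have hs : ∀ j ∈ K, 0 < a j + b j := fun j hj =>
      lt_of_le_of_ne (by have := ha j hj; have := hb j hj; linarith) (Ne.symm (h0 j hj))
    have hsum1 : ∑ j ∈ K, ((k:ℝ)⁻¹) = 1 := by
      rw [Finset.sum_const, hK, nsmul_eq_mul, mul_inv_cancel₀ (ne_of_gt hkR)]
    have hga : ∏ j ∈ K, (a j / (a j + b j)) ^ ((k:ℝ)⁻¹) ≤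
        ∑ j ∈ K, ((k:ℝ)⁻¹) * (a j / (a j + b j)) :=
      Real.geom_mean_le_arith_mean_weighted K _ _ (fun _ _ => hp0) hsum1
        (fun j hj => div_nonneg (ha j hj) (hs j hj).le)
    have hgb : ∏ j ∈ K, (b j / (a j + b j)) ^ ((k:ℝ)⁻¹) ≤
        ∑ j ∈ K, ((k:ℝ)⁻¹) * (b j / (a j + b j)) :=
      Real.geom_mean_le_arith_mean_weighted K _ _ (fun _ _ => hp0) hsum1
        (fun j hj => div_nonneg (hb j hj) (hs j hj).le)
    have hsumadd : (∑ j ∈ K, ((k:ℝ)⁻¹) * (a j / (a j + b j))) +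
        (∑ j ∈ K, ((k:ℝ)⁻¹) * (b j / (a j + b j))) = 1 := by
      rw [← Finset.sum_add_distrib, ← hsum1]
      refine Finset.sum_congr rfl fun j hj => ?_
      rw [← mul_add, ← add_div, div_self (ne_of_gt (hs j hj)), mul_one]
    have hfa : ∏ j ∈ K, a j ^ ((k:ℝ)⁻¹) =
        (∏ j ∈ K, (a j / (a j + b j)) ^ ((k:ℝ)⁻¹)) * ∏ j ∈ K, (a j + b j) ^ ((k:ℝ)⁻¹) := by
      rw [← Finset.prod_mul_distrib]
      refine Finset.prod_congr rfl fun j hj => ?_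
      rw [← Real.mul_rpow (div_nonneg (ha j hj) (hs j hj).le) (hs j hj).le,
        div_mul_cancel₀ _ (ne_of_gt (hs j hj))]
    have hfb : ∏ j ∈ K, b j ^ ((k:ℝ)⁻¹) =
        (∏ j ∈ K, (b j / (a j + b j)) ^ ((k:ℝ)⁻¹)) * ∏ j ∈ K, (a j + b j) ^ ((k:ℝ)⁻¹) := by
      rw [← Finset.prod_mul_distrib]
      refine Finset.prod_congr rfl fun j hj => ?_
      rw [← Real.mul_rpow (div_nonneg (hb j hj) (hs j hj).le) (hs j hj).le,
        div_mul_cancel₀ _ (ne_of_gt (hs j hj))]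
    have hP : (0:ℝ) ≤ ∏ j ∈ K, (a j + b j) ^ ((k:ℝ)⁻¹) :=
      Finset.prod_nonneg fun j hj => Real.rpow_nonneg (hs j hj).le _
    calc (∏ j ∈ K, a j ^ ((k:ℝ)⁻¹)) + (∏ j ∈ K, b j ^ ((k:ℝ)⁻¹))
        = ((∏ j ∈ K, (a j / (a j + b j)) ^ ((k:ℝ)⁻¹)) +
            (∏ j ∈ K, (b j / (a j + b j)) ^ ((k:ℝ)⁻¹))) *
            ∏ j ∈ K, (a j + b j) ^ ((k:ℝ)⁻¹) := by rw [hfa, hfb, add_mul]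
      _ ≤ 1 * ∏ j ∈ K, (a j + b j) ^ ((k:ℝ)⁻¹) := by
          refine mul_le_mul_of_nonneg_right ?_ hP
          calc _ ≤ (∑ j ∈ K, ((k:ℝ)⁻¹) * (a j / (a j + b j))) +
              (∑ j ∈ K, ((k:ℝ)⁻¹) * (b j / (a j + b j))) := add_le_add hga hgb
            _ = 1 := hsumadd
      _ = _ := one_mul _

private lemma shearer {ι J : Type*} [DecidableEq ι] [DecidableEq J] (k : ℕ) (hk : 0 < k)
    (U : Finset ι) (js : Finset J) (S : J → Finset ι)
    (hcov : ∀ i ∈ U, k ≤ (js.filter (fun j => i ∈ S j)).card)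
    (A : Finset (Finset ι)) (hA : ∀ x ∈ A, x ⊆ U) :
    (A.card : ℝ) ≤ ∏ j ∈ js, ((A.image (· ∩ S j)).card : ℝ) ^ ((k:ℝ)⁻¹) := by
  have hp0 : (0:ℝ) ≤ (k:ℝ)⁻¹ := by positivity
  induction U using Finset.induction_on generalizing S A with
  | empty =>
    rcases A.eq_empty_or_nonempty with rfl | hne
    · have h00 : ((∅:Finset (Finset ι)).card : ℝ) = 0 := by simp
      rw [h00]
      exact Finset.prod_nonneg fun j _ => Real.rpow_nonneg (Nat.cast_nonneg _) _
    · have hA1 : A ⊆ {∅} := fun x hx => by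
        simp [Finset.subset_empty.mp (hA x hx)]
      have hle1 : (A.card : ℝ) ≤ 1 := by
        exact_mod_cast (Finset.card_le_card hA1).trans (by simp)
      have hfac : ∀ j ∈ js, (1:ℝ) ≤ ((A.image (· ∩ S j)).card : ℝ) ^ ((k:ℝ)⁻¹) := by
        intro j _
        have h1 : (1:ℝ) ≤ ((A.image (· ∩ S j)).card : ℝ) := by
          exact_mod_cast Finset.card_pos.mpr (hne.image _)
        calc (1:ℝ) = (1:ℝ) ^ ((k:ℝ)⁻¹) := (Real.one_rpow _).symm
          _ ≤ _ := Real.rpow_le_rpow zero_le_one h1 hp0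
      have hone : (1:ℝ) ≤ ∏ j ∈ js, ((A.image (· ∩ S j)).card : ℝ) ^ ((k:ℝ)⁻¹) := by
        have hpp := Finset.prod_le_prod (s := js) (f := fun _ => (1:ℝ))
          (g := fun j => ((A.image (· ∩ S j)).card : ℝ) ^ ((k:ℝ)⁻¹))
          (fun j _ => zero_le_one) hfac
        simpa using hpp
      exact hle1.trans hone
  | @insert i U' hiU' IH =>
    classical
    set S' : J → Finset ι := fun j => (S j).erase i with hS'
    set At := A.filter (fun x => i ∈ x) with hAt
    set A0 := A.filter (fun x => i ∉ x) with hA0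
    set A1 := At.image (fun x => x.erase i) with hA1
    have herase_inj : Set.InjOn (fun x : Finset ι => x.erase i) (↑At : Set (Finset ι)) := by
      intro x hx y hy hxy
      have hxy' : x.erase i = y.erase i := hxy
      have hxi : i ∈ x := (Finset.mem_filter.mp hx).2
      have hyi : i ∈ y := (Finset.mem_filter.mp hy).2
      rw [← Finset.insert_erase hxi, hxy', Finset.insert_erase hyi]
    have hcard1 : A1.card = At.card := Finset.card_image_of_injOn herase_inj
    have hsplit : A.card = A0.card + A1.card := by
      rw [hcard1, add_comm]
      exact (Finset.card_filter_add_card_filter_not (fun x => i ∈ x)).symm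
    have hA0U : ∀ x ∈ A0, x ⊆ U' := by
      intro x hx a ha
      have := hA x (Finset.mem_of_mem_filter x hx) ha
      rcases Finset.mem_insert.mp this with rfl | h
      · exact absurd ha (Finset.mem_filter.mp hx).2
      · exact h
    have hA1U : ∀ x ∈ A1, x ⊆ U' := by
      intro x hx
      obtain ⟨y, hy, rfl⟩ := Finset.mem_image.mp hx
      intro a ha
      have hay : a ∈ y := Finset.mem_of_mem_erase ha
      have := hA y (Finset.mem_of_mem_filter y hy) hay
      rcases Finset.mem_insert.mp this with rfl | h
      · exact absurd rfl (Finset.ne_of_mem_erase ha)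
      · exact h
    have hcov' : ∀ i' ∈ U', k ≤ (js.filter (fun j => i' ∈ S' j)).card := by
      intro i' hi'
      have hne : i' ≠ i := fun h => hiU' (h ▸ hi')
      have heq : (js.filter (fun j => i' ∈ S' j)) =
          (js.filter (fun j => i' ∈ S j)) := by
        apply Finset.filter_congr
        intro j _
        simp [hS', Finset.mem_erase, hne]
      rw [heq]
      exact hcov i' (Finset.mem_insert_of_mem hi')
    have h0 := IH S' hcov' A0 hA0U
    have h1 := IH S' hcov' A1 hA1U
    -- per-coordinate bounds
    have key1 : ∀ j, A1.image (· ∩ S' j) = At.image (fun x => (x ∩ S j).erase i) := by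
      intro j
      rw [hA1, Finset.image_image]
      apply Finset.image_congr
      intro x _
      ext a
      simp only [hS', Function.comp_apply, Finset.mem_inter, Finset.mem_erase]
      tauto
    have key0 : ∀ j, A0.image (· ∩ S' j) = A0.image (· ∩ S j) := by
      intro j
      apply Finset.image_congr
      intro x hx
      have hxi : i ∉ x := (Finset.mem_filter.mp hx).2
      ext a
      simp only [hS', Finset.mem_inter, Finset.mem_erase]
      constructor
      · tauto
      · rintro ⟨hax, haS⟩
        exact ⟨hax, fun h => hxi (h ▸ hax), haS⟩
    have hins : ∀ j, i ∈ S j → ∀ y ∈ At.image (fun x => (x ∩ S j).erase i),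
        insert i y ∈ A.image (· ∩ S j) := by
      intro j hiS y hy
      obtain ⟨x, hx, rfl⟩ := Finset.mem_image.mp hy
      have hxi : i ∈ x := (Finset.mem_filter.mp hx).2
      have he : insert i ((x ∩ S j).erase i) = x ∩ S j :=
        Finset.insert_erase (Finset.mem_inter.mpr ⟨hxi, hiS⟩)
      rw [he]
      exact Finset.mem_image_of_mem _ (Finset.mem_of_mem_filter x hx)
    have hinsinj : ∀ j, Set.InjOn (insert i) ((At.image (fun x => (x ∩ S j).erase i)) : Set (Finset ι)) := by
      intro j y hy z hz hyz
      obtain ⟨xy, _, rfl⟩ := Finset.mem_image.mp hy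
      obtain ⟨xz, _, rfl⟩ := Finset.mem_image.mp hz
      rw [← Finset.erase_insert (Finset.notMem_erase i _), hyz,
        Finset.erase_insert (Finset.notMem_erase i _)]
    have claim0 : ∀ j, ((A0.image (· ∩ S' j)).card : ℝ) ≤
        ((A.image (· ∩ S j)).card : ℝ) := by
      intro j
      rw [key0 j]
      exact_mod_cast Finset.card_le_card
        (Finset.image_subset_image (Finset.filter_subset _ _))
    have claim1 : ∀ j, ((A1.image (· ∩ S' j)).card : ℝ) ≤
        ((A.image (· ∩ S j)).card : ℝ) := by
      intro j
      rw [key1 j]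
      by_cases hiS : i ∈ S j
      · have hc : (At.image (fun x => (x ∩ S j).erase i)).card =
            ((At.image (fun x => (x ∩ S j).erase i)).image (insert i)).card :=
          (Finset.card_image_of_injOn (hinsinj j)).symm
        rw [hc]
        apply (Nat.cast_le).mpr
        apply Finset.card_le_card
        intro y hy
        obtain ⟨z, hz, rfl⟩ := Finset.mem_image.mp hy
        exact hins j hiS z hz
      · apply (Nat.cast_le).mpr
        apply Finset.card_le_card
        intro y hy
        obtain ⟨x, hx, rfl⟩ := Finset.mem_image.mp hy
        have he : (x ∩ S j).erase i = x ∩ S j := by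
          apply Finset.erase_eq_of_notMem
          simp [hiS]
        rw [he]
        exact Finset.mem_image_of_mem _ (Finset.mem_of_mem_filter x hx)
    have claimB : ∀ j, i ∈ S j →
        ((A0.image (· ∩ S' j)).card : ℝ) + ((A1.image (· ∩ S' j)).card : ℝ) ≤
        ((A.image (· ∩ S j)).card : ℝ) := by
      intro j hiS
      rw [key0 j, key1 j]
      set X0 := A0.image (· ∩ S j) with hX0
      set X1 := At.image (fun x => (x ∩ S j).erase i) with hX1
      have hc : X1.card = (X1.image (insert i)).card :=
        (Finset.card_image_of_injOn (hinsinj j)).symm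
      have hsub : X0 ∪ X1.image (insert i) ⊆ A.image (· ∩ S j) := by
        apply Finset.union_subset
        · exact Finset.image_subset_image (Finset.filter_subset _ _)
        · intro y hy
          obtain ⟨z, hz, rfl⟩ := Finset.mem_image.mp hy
          exact hins j hiS z hz
      have hdisj : Disjoint X0 (X1.image (insert i)) := by
        rw [Finset.disjoint_left]
        intro y hy hy'
        obtain ⟨x, hx, rfl⟩ := Finset.mem_image.mp hy
        obtain ⟨z, hz, hzy⟩ := Finset.mem_image.mp hy'
        have hxi : i ∉ x := (Finset.mem_filter.mp hx).2
        have hmem : i ∈ x ∩ S j := hzy ▸ Finset.mem_insert_self i z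
        exact hxi (Finset.mem_inter.mp hmem).1
      have hfin : X0.card + X1.card ≤ (A.image (· ∩ S j)).card := by
        rw [hc, ← Finset.card_union_of_disjoint hdisj]
        exact Finset.card_le_card hsub
      exact_mod_cast hfin
    -- choose K
    obtain ⟨K, hKsub, hKcard⟩ := Finset.exists_subset_card_eq
      (s := js.filter (fun j => i ∈ S j)) (hcov i (Finset.mem_insert_self i U'))
    have hKjs : K ⊆ js := hKsub.trans (Finset.filter_subset _ _)
    have hKiS : ∀ j ∈ K, i ∈ S j := fun j hj => (Finset.mem_filter.mp (hKsub hj)).2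
    set F := fun j => ((A.image (· ∩ S j)).card : ℝ) with hF
    set f0 := fun j => ((A0.image (· ∩ S' j)).card : ℝ) with hf0
    set f1 := fun j => ((A1.image (· ∩ S' j)).card : ℝ) with hf1
    have hprodsplit : ∀ (f : J → ℝ),
        ∏ j ∈ js, f j = (∏ j ∈ js \ K, f j) * ∏ j ∈ K, f j :=
      fun f => (Finset.prod_sdiff hKjs).symm
    have houtnn : (0:ℝ) ≤ ∏ j ∈ js \ K, F j ^ ((k:ℝ)⁻¹) :=
      Finset.prod_nonneg fun j _ => Real.rpow_nonneg (Nat.cast_nonneg _) _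
    have hbound : ∀ (g : J → ℝ), (∀ j, 0 ≤ g j) → (∀ j, g j ≤ F j) →
        ∏ j ∈ js, g j ^ ((k:ℝ)⁻¹) ≤ (∏ j ∈ js \ K, F j ^ ((k:ℝ)⁻¹)) * ∏ j ∈ K, g j ^ ((k:ℝ)⁻¹) := by
      intro g hg hgF
      rw [hprodsplit (fun j => g j ^ ((k:ℝ)⁻¹))]
      apply mul_le_mul_of_nonneg_right
      · exact Finset.prod_le_prod (fun j _ => Real.rpow_nonneg (hg j) _)
          (fun j _ => Real.rpow_le_rpow (hg j) (hgF j) hp0)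
      · exact Finset.prod_nonneg fun j _ => Real.rpow_nonneg (hg j) _
    calc (A.card : ℝ) = (A0.card : ℝ) + (A1.card : ℝ) := by
          rw [hsplit]; push_cast; ring
      _ ≤ (∏ j ∈ js, f0 j ^ ((k:ℝ)⁻¹)) + (∏ j ∈ js, f1 j ^ ((k:ℝ)⁻¹)) := add_le_add h0 h1
      _ ≤ (∏ j ∈ js \ K, F j ^ ((k:ℝ)⁻¹)) * (∏ j ∈ K, f0 j ^ ((k:ℝ)⁻¹))
          + (∏ j ∈ js \ K, F j ^ ((k:ℝ)⁻¹)) * (∏ j ∈ K, f1 j ^ ((k:ℝ)⁻¹)) :=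
          add_le_add (hbound f0 (fun j => Nat.cast_nonneg _) claim0)
            (hbound f1 (fun j => Nat.cast_nonneg _) claim1)
      _ = (∏ j ∈ js \ K, F j ^ ((k:ℝ)⁻¹)) *
          ((∏ j ∈ K, f0 j ^ ((k:ℝ)⁻¹)) + (∏ j ∈ K, f1 j ^ ((k:ℝ)⁻¹))) := by ring
      _ ≤ (∏ j ∈ js \ K, F j ^ ((k:ℝ)⁻¹)) * ∏ j ∈ K, (f0 j + f1 j) ^ ((k:ℝ)⁻¹) := by
          apply mul_le_mul_of_nonneg_left ?_ houtnn
          exact geom_add_le k hk K hKcard f0 f1 (fun j _ => Nat.cast_nonneg _)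
            (fun j _ => Nat.cast_nonneg _)
      _ ≤ (∏ j ∈ js \ K, F j ^ ((k:ℝ)⁻¹)) * ∏ j ∈ K, F j ^ ((k:ℝ)⁻¹) := by
          apply mul_le_mul_of_nonneg_left ?_ houtnn
          refine Finset.prod_le_prod (fun j _ => Real.rpow_nonneg (by positivity) _)
            (fun j hj => Real.rpow_le_rpow (by positivity) (claimB j (hKiS j hj)) hp0)
      _ = ∏ j ∈ js, F j ^ ((k:ℝ)⁻¹) := (hprodsplit _).symm

namespace PavingEnum

lemma mrk_eq_ncard_base {α : Type*} {M : Matroid α} {B : Set α} (hB : M.IsBase B) :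
    mrk M = B.ncard := by
  have hset : {n : ℕ | ∃ B', M.IsBase B' ∧ B'.ncard = n} = {B.ncard} := by
    ext k
    constructor
    · rintro ⟨B', hB', rfl⟩
      exact (hB'.ncard_eq_ncard_of_isBase hB)
    · rintro rfl
      exact ⟨B, hB, rfl⟩
  rw [mrk, hset, csSup_singleton]

@[simp] lemma mcontract_ground {α : Type*} (M : Matroid α) (C : Set α) :
    (mcontract M C).E = M.E \ C := rfl

lemma dual_basis_compl_iff {α : Type*} {M : Matroid α} {C X : Set α} (hC : M.Indep C)
    (hCX : C ⊆ X) (hXE : X ⊆ M.E) :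
    M✶.IsBasis (M.E \ X) (M.E \ C) ↔ M.IsBase X := by
  constructor
  · intro h
    have hind : M✶.Indep (M.E \ X) := h.indep
    rw [dual_indep_iff_exists (diff_subset)] at hind
    obtain ⟨B₀, hB₀, hdisj⟩ := hind
    have hB₀X : B₀ ⊆ X := by
      intro a ha
      by_contra haX
      exact hdisj.le_bot ⟨⟨hB₀.subset_ground ha, haX⟩, ha⟩
    obtain ⟨B₁, hB₁, hCB₁, hB₁sub⟩ := hC.exists_isBase_subset_union_isBase hB₀
    have hB₁X : B₁ ⊆ X := hB₁sub.trans (union_subset hCX hB₀X)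
    have hind₁ : M✶.Indep (M.E \ B₁) := by
      rw [dual_indep_iff_exists (diff_subset)]
      exact ⟨B₁, hB₁, disjoint_sdiff_left⟩
    have hEq : M.E \ X = M.E \ B₁ :=
      h.eq_of_subset_indep hind₁ (diff_subset_diff_right hB₁X)
        (diff_subset_diff_right hCB₁)
    have : X = B₁ := by
      rw [← diff_diff_cancel_left hXE, hEq, diff_diff_cancel_left hB₁.subset_ground]
    rwa [this]
  · intro hX
    rw [isBasis_iff (show M.E \ C ⊆ M✶.E by rw [dual_ground]; exact diff_subset)]
    refine ⟨?_, diff_subset_diff_right hCX, ?_⟩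
    · rw [dual_indep_iff_exists (diff_subset)]
      exact ⟨X, hX, disjoint_sdiff_left⟩
    · intro J hJ hXJ hJC
      rw [dual_indep_iff_exists (hJC.trans diff_subset)] at hJ
      obtain ⟨B₀, hB₀, hdisj⟩ := hJ
      have hB₀X : B₀ ⊆ X := by
        intro a ha
        have haE : a ∈ M.E := hB₀.subset_ground ha
        by_contra haX
        exact hdisj.le_bot ⟨hXJ ⟨haE, haX⟩, ha⟩
      have hBX : B₀ = X := hB₀.eq_of_subset_isBase hX hB₀X
      refine (hXJ.antisymm ?_)
      intro a haJ
      have haE : a ∈ M.E := (hJC.trans diff_subset) haJ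
      refine ⟨haE, fun haX => ?_⟩
      exact hdisj.le_bot ⟨haJ, hBX ▸ haX⟩

lemma base_mcontract_iff {α : Type*} {M : Matroid α} {C B : Set α} (hC : M.Indep C) :
    (mcontract M C).IsBase B ↔ Disjoint B C ∧ M.IsBase (B ∪ C) := by
  have hCE : C ⊆ M.E := hC.subset_ground
  rw [mcontract, dual_isBase_iff']
  rw [show (M✶ ↾ (M.E \ C)).E = M.E \ C from rfl]
  have hrw : ∀ B' : Set α, (M✶ ↾ (M.E \ C)).IsBase B' ↔ M✶.IsBasis B' (M.E \ C) := by
    intro B'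
    exact isBase_restrict_iff (by exact diff_subset)
  constructor
  · rintro ⟨hb, hBE⟩
    rw [hrw] at hb
    have hdisjBC : Disjoint B C := disjoint_sdiff_left.mono_left hBE
    have hBCE : B ∪ C ⊆ M.E := union_subset (hBE.trans diff_subset) hCE
    have hXd : (M.E \ C) \ B = M.E \ (B ∪ C) := by
      rw [diff_diff, union_comm]
    rw [hXd] at hb
    rw [← dual_basis_compl_iff hC (subset_union_right) hBCE]
    exact ⟨hdisjBC, hb⟩
  · rintro ⟨hdisj, hBase⟩
    have hBE : B ⊆ M.E \ C := by
      intro a ha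
      exact ⟨hBase.subset_ground (subset_union_left ha), fun hc => hdisj.le_bot ⟨ha, hc⟩⟩
    refine ⟨?_, hBE⟩
    rw [hrw]
    have hXd : (M.E \ C) \ B = M.E \ (B ∪ C) := by
      rw [diff_diff, union_comm]
    rw [hXd]
    rw [dual_basis_compl_iff hC (subset_union_right) (union_subset (hBE.trans diff_subset) hCE)]
    exact hBase

lemma exists_psi {n t : ℕ} (T : Finset (Fin n)) (hTcard : T.card = t) (htn : t ≤ n) :
    ∃ ψ : Fin (n-t) → Fin n, Function.Injective ψ ∧
      Set.range ψ = ((↑T : Set (Fin n)))ᶜ := by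
  classical
  have hcard : Fintype.card ((↑(Tᶜ) : Set (Fin n))) = n - t := by
    rw [← Set.toFinset_card, Finset.toFinset_coe, Finset.card_compl, Fintype.card_fin, hTcard]
  obtain e := Fintype.equivFinOfCardEq hcard
  refine ⟨fun j => ↑(e.symm j), Subtype.val_injective.comp e.symm.injective, ?_⟩
  have h1 : Set.range (fun j => (↑(e.symm j) : Fin n)) = Subtype.val '' Set.range e.symm := by
    rw [← Set.range_comp]; rfl
  rw [h1, e.symm.surjective.range_eq, Set.image_univ, Subtype.range_coe]
  simp

lemma key_facts (𝓜 : ∀ ⦃α : Type⦄, Matroid α → Prop)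
    (hcontract : ∀ (α : Type) (M : Matroid α) (C : Set α), 𝓜 M → 𝓜 (mcontract M C))
    (hiso : ∀ (α β : Type) (M : Matroid α) (N : Matroid β), 𝓜 M → MatroidIso M N → 𝓜 N)
    {t r n : ℕ} (htr : t ≤ r)
    {T : Finset (Fin n)} (hTcard : T.card = t)
    {M : Matroid (Fin n)} (hM𝓜 : 𝓜 M) (hME : M.E = Set.univ) (hMrk : mrk M = r)
    (hTind : M.Indep ↑T)
    {ψ : Fin (n-t) → Fin n} (hinj : Function.Injective ψ)
    (hrange : Set.range ψ = ((↑T : Set (Fin n)))ᶜ) :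
    (𝓜 ((mcontract M ↑T).comap ψ) ∧ ((mcontract M ↑T).comap ψ).E = Set.univ ∧
      mrk ((mcontract M ↑T).comap ψ) = r - t) ∧
    ∀ B : Finset (Fin n), T ⊆ B →
      (M.IsBase ↑B ↔ ((mcontract M ↑T).comap ψ).IsBase (ψ ⁻¹' ↑(B \ T))) := by
  classical
  set MC := mcontract M ↑T with hMCdef
  set N := MC.comap ψ with hNdef
  have hMCE : MC.E = ((↑T : Set (Fin n)))ᶜ := by
    rw [hMCdef, mcontract_ground, hME, compl_eq_univ_diff]
  have hNEset : N.E = ψ ⁻¹' MC.E := comap_ground_eq MC ψ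
  have hNE : N.E = Set.univ := by
    rw [hNEset, hMCE, ← hrange]
    ext j
    simp [Set.mem_preimage]
  -- base characterization of N
  have hNbase : ∀ B' : Set (Fin (n-t)), N.IsBase B' ↔ MC.IsBase (ψ '' B') := by
    intro B'
    rw [hNdef, comap_isBase_iff]
    have h1 : ψ ⁻¹' MC.E = Set.univ := by rw [← hNEset]; exact hNE
    rw [h1]
    rw [Set.image_univ, hrange, ← hMCE]
    rw [isBasis_ground_iff]
    simp [hinj.injOn.mono (Set.subset_univ _)]
  -- all bases of M have ncard r
  have hBc : ∀ B₀ : Set (Fin n), M.IsBase B₀ → B₀.ncard = r := by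
    intro B₀ h
    rw [← mrk_eq_ncard_base h, hMrk]
  have hTncard : (↑T : Set (Fin n)).ncard = t := by
    rw [Set.ncard_coe_finset, hTcard]
  -- every base of N has ncard r - t
  have hNBc : ∀ B' : Set (Fin (n-t)), N.IsBase B' → B'.ncard = r - t := by
    intro B' h
    rw [hNbase] at h
    rw [base_mcontract_iff hTind] at h
    obtain ⟨hdisj, hbase⟩ := h
    have hU : (ψ '' B' ∪ ↑T).ncard = r := hBc _ hbase
    rw [Set.ncard_union_eq hdisj (Set.toFinite _) (Set.toFinite _), hTncard] at hU
    rw [← Set.ncard_image_of_injective B' hinj]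
    omega
  have hNrk : mrk N = r - t := by
    obtain ⟨B', hB'⟩ := N.exists_isBase
    rw [mrk_eq_ncard_base hB', hNBc B' hB']
  -- 𝓜 membership
  have hMCmem : 𝓜 MC := hcontract _ M ↑T hM𝓜
  have hNmem : 𝓜 N := by
    apply hiso _ _ MC N hMCmem
    have h1 : MC.E = Set.range ψ := by rw [hMCE, hrange]
    refine ⟨(Equiv.setCongr h1).trans ((Equiv.ofInjective ψ hinj).symm.trans
      ((Equiv.Set.univ _).symm.trans (Equiv.setCongr hNE.symm))), ?_⟩
    intro I
    set e := (Equiv.setCongr h1).trans ((Equiv.ofInjective ψ hinj).symm.trans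
      ((Equiv.Set.univ _).symm.trans (Equiv.setCongr hNE.symm))) with hedef
    have he : ∀ x : MC.E, ψ ↑(e x) = ↑x := by
      intro x
      simp only [hedef, Equiv.trans_apply, Equiv.setCongr_apply, Equiv.Set.univ]
      exact Equiv.apply_ofInjective_symm hinj _
    have himg : ψ '' (Subtype.val '' (e '' I)) = Subtype.val '' I := by
      rw [Set.image_image, Set.image_image]
      exact Set.image_congr fun x _ => he x
    have hNind : ∀ S : Set (Fin (n-t)), N.Indep S ↔ MC.Indep (ψ '' S) := by
      intro S
      rw [hNdef, comap_indep_iff]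
      simp [hinj.injOn.mono (Set.subset_univ _)]
    rw [hNind, himg]
  refine ⟨⟨hNmem, hNE, hNrk⟩, ?_⟩
  -- base determination
  intro B hTB
  have hsub : (↑(B \ T) : Set (Fin n)) ⊆ Set.range ψ := by
    rw [hrange, Finset.coe_sdiff]
    intro a ha
    exact fun hc => ha.2 hc
  rw [hNbase, Set.image_preimage_eq_of_subset hsub]
  rw [base_mcontract_iff hTind, Finset.coe_sdiff]
  have hu : (↑B \ ↑T : Set (Fin n)) ∪ ↑T = ↑B := by
    rw [Set.diff_union_of_subset]
    exact_mod_cast Finset.coe_subset.mpr hTB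
  rw [hu]
  simp [disjoint_sdiff_left]

end PavingEnum

/-- If 𝓜 is a class of matroids closed under contraction and isomorphism,
and 0 ≤ t ≤ r ≤ n, then
log(\tilde m(n,r) + 1) ≤ (C(n,r)/C(n−t,r−t)) · log(\tilde m(n−t,r−t) + 1). -/
theorem class_count_blowup (𝓜 : ∀ ⦃α : Type⦄, Matroid α → Prop)
    (hcontract : ∀ (α : Type) (M : Matroid α) (C : Set α), 𝓜 M → 𝓜 (mcontract M C))
    (hiso : ∀ (α β : Type) (M : Matroid α) (N : Matroid β), 𝓜 M → MatroidIso M N → 𝓜 N)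
    (t r n : ℕ) (htr : t ≤ r) (hrn : r ≤ n) :
    Real.log (classCount 𝓜 n r + 1) ≤
      ((n.choose r : ℝ) / ((n - t).choose (r - t) : ℝ)) *
        Real.log (classCount 𝓜 (n - t) (r - t) + 1) := by
  classical
  set k := r.choose t with hkdef
  have hk : 0 < k := Nat.choose_pos htr
  have hPfin : {M : Matroid (Fin n) | 𝓜 M ∧ M.E = Set.univ ∧ mrk M = r}.Finite :=
    (Matroid.finite_setOf_matroid' (Set.finite_univ)).subset (fun M hM => hM.2.1)
  have hQfin : {N : Matroid (Fin (n-t)) | 𝓜 N ∧ N.E = Set.univ ∧ mrk N = r - t}.Finite :=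
    (Matroid.finite_setOf_matroid' (Set.finite_univ)).subset (fun M hM => hM.2.1)
  set Pf := hPfin.toFinset with hPfdef
  set Qf := hQfin.toFinset with hQfdef
  have hmP : classCount 𝓜 n r = Pf.card := by
    rw [classCount, Set.ncard_eq_toFinset_card _ hPfin]
  have hmQ : classCount 𝓜 (n-t) (r-t) = Qf.card := by
    rw [classCount, Set.ncard_eq_toFinset_card _ hQfin]
  set basesF : Matroid (Fin n) → Finset (Finset (Fin n)) :=
    fun M => (Set.toFinite {B : Finset (Fin n) | M.IsBase ↑B}).toFinset with hbasesF
  have hBmem : ∀ (M : Matroid (Fin n)) (B : Finset (Fin n)),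
      B ∈ basesF M ↔ M.IsBase ↑B := by
    intro M B
    simp [hbasesF, Set.Finite.mem_toFinset]
  set U : Finset (Finset (Fin n)) := Finset.univ.filter (fun B => B.card = r) with hU
  set js : Finset (Finset (Fin n)) := Finset.univ.filter (fun T => T.card = t) with hjs
  set S : Finset (Fin n) → Finset (Finset (Fin n)) :=
    fun T => U.filter (fun B => T ⊆ B) with hS
  set A : Finset (Finset (Finset (Fin n))) := Pf.image basesF ∪ {∅} with hA
  have hAU : ∀ x ∈ A, x ⊆ U := by
    intro x hx
    rw [hA, Finset.mem_union] at hx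
    rcases hx with hx | hx
    · obtain ⟨M, hM, rfl⟩ := Finset.mem_image.mp hx
      rw [hPfdef, Set.Finite.mem_toFinset] at hM
      intro B hB
      rw [hBmem] at hB
      have hr : (↑B : Set (Fin n)).ncard = r := by
        rw [← mrk_eq_ncard_base hB, hM.2.2]
      rw [hU, Finset.mem_filter]
      refine ⟨Finset.mem_univ _, ?_⟩
      rwa [Set.ncard_coe_finset] at hr
    · rw [Finset.mem_singleton] at hx
      subst hx
      exact Finset.empty_subset _
  have hcov : ∀ B ∈ U, k ≤ (js.filter (fun T => B ∈ S T)).card := by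
    intro B hB
    have hBr : B.card = r := (Finset.mem_filter.mp hB).2
    have hpc : js.filter (fun T => B ∈ S T) = B.powersetCard t := by
      ext T
      simp only [hjs, hS, Finset.mem_filter, Finset.mem_univ, true_and,
        Finset.mem_powersetCard]
      constructor
      · rintro ⟨h1, _, h2⟩; exact ⟨h2, h1⟩
      · rintro ⟨h2, h1⟩; exact ⟨h1, hB, h2⟩
    rw [hpc, Finset.card_powersetCard, hBr]
  have hane : ∅ ∉ Pf.image basesF := by
    intro hmem
    obtain ⟨M, hM, hMe⟩ := Finset.mem_image.mp hmem
    obtain ⟨B, hBase⟩ := M.exists_isBase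
    have hBfin : B.Finite := Set.toFinite _
    have hmem2 : hBfin.toFinset ∈ basesF M := by
      rw [hBmem, Set.Finite.coe_toFinset]
      exact hBase
    rw [hMe] at hmem2
    exact absurd hmem2 (Finset.notMem_empty _)
  have hinjF : Set.InjOn basesF ↑Pf := by
    intro M₁ h₁ M₂ h₂ heq
    rw [Finset.mem_coe, hPfdef, Set.Finite.mem_toFinset] at h₁ h₂
    apply Matroid.ext_isBase (by rw [h₁.2.1, h₂.2.1])
    intro B hBE
    have hBfin : B.Finite := Set.toFinite _
    have h3 : M₁.IsBase ↑(hBfin.toFinset) ↔ M₂.IsBase ↑(hBfin.toFinset) := by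
      rw [← hBmem, ← hBmem, heq]
    rwa [Set.Finite.coe_toFinset] at h3
  have hcardA : A.card = Pf.card + 1 := by
    rw [hA, Finset.card_union_of_disjoint (by simp [hane]),
      Finset.card_image_of_injOn hinjF, Finset.card_singleton]
  have hproj : ∀ T ∈ js, (A.image (· ∩ S T)).card ≤ Qf.card + 1 := by
    intro T hT
    have hTcard : T.card = t := (Finset.mem_filter.mp hT).2
    obtain ⟨ψ, hinj, hrange⟩ := exists_psi T hTcard (htr.trans hrn)
    set F : Matroid (Fin (n-t)) → Finset (Finset (Fin n)) :=
      fun N => (S T).filter (fun B => N.IsBase (ψ ⁻¹' ↑(B \ T))) with hF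
    have hsub : A.image (· ∩ S T) ⊆ Qf.image F ∪ {∅} := by
      intro y hy
      obtain ⟨x, hx, rfl⟩ := Finset.mem_image.mp hy
      rw [hA, Finset.mem_union] at hx
      rcases hx with hx | hx
      · obtain ⟨M, hMmem, rfl⟩ := Finset.mem_image.mp hx
        rw [hPfdef, Set.Finite.mem_toFinset] at hMmem
        obtain ⟨hM𝓜, hME, hMrk⟩ := hMmem
        by_cases hTind : M.Indep ↑T
        · obtain ⟨⟨hNmem, hNE, hNrk⟩, hdet⟩ :=
            key_facts 𝓜 hcontract hiso htr hTcard hM𝓜 hME hMrk hTind hinj hrange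
          apply Finset.mem_union_left
          apply Finset.mem_image.mpr
          refine ⟨(mcontract M ↑T).comap ψ, ?_, ?_⟩
          · rw [hQfdef, Set.Finite.mem_toFinset]
            exact ⟨hNmem, hNE, hNrk⟩
          · ext B
            simp only [hF, Finset.mem_filter, Finset.mem_inter]
            constructor
            · rintro ⟨hBS, hBbase⟩
              have hTB : T ⊆ B := (Finset.mem_filter.mp hBS).2
              exact ⟨(hBmem M B).mpr ((hdet B hTB).mpr hBbase), hBS⟩
            · rintro ⟨hBbases, hBS⟩
              have hTB : T ⊆ B := (Finset.mem_filter.mp hBS).2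
              exact ⟨hBS, (hdet B hTB).mp ((hBmem M B).mp hBbases)⟩
        · apply Finset.mem_union_right
          rw [Finset.mem_singleton, Finset.eq_empty_iff_forall_notMem]
          intro B hB
          rw [Finset.mem_inter] at hB
          have hBase : M.IsBase ↑B := (hBmem M B).mp hB.1
          have hTB : T ⊆ B := (Finset.mem_filter.mp hB.2).2
          exact hTind (hBase.indep.subset (by exact_mod_cast Finset.coe_subset.mpr hTB))
      · rw [Finset.mem_singleton] at hx
        subst hx
        apply Finset.mem_union_right
        simp
    calc (A.image (· ∩ S T)).card ≤ (Qf.image F ∪ {∅}).card := Finset.card_le_card hsub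
      _ ≤ (Qf.image F).card + 1 := by
          simpa using Finset.card_union_le (Qf.image F) {∅}
      _ ≤ Qf.card + 1 := by
          have hle := Finset.card_image_le (s := Qf) (f := F)
          omega
  have hjscard : js.card = n.choose t := by
    have hpe : js = Finset.univ.powersetCard t := by
      ext T
      simp [hjs, Finset.mem_powersetCard]
    rw [hpe, Finset.card_powersetCard, Finset.card_univ, Fintype.card_fin]
  have hshearer := shearer k hk U js S hcov A hAU
  have hstep : (A.card : ℝ) ≤ (((Qf.card : ℝ) + 1) ^ ((k:ℝ)⁻¹)) ^ (n.choose t) := by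
    refine hshearer.trans ?_
    calc ∏ T ∈ js, ((A.image (· ∩ S T)).card : ℝ) ^ ((k:ℝ)⁻¹)
        ≤ ∏ T ∈ js, ((Qf.card : ℝ) + 1) ^ ((k:ℝ)⁻¹) := by
          refine Finset.prod_le_prod (fun T _ => Real.rpow_nonneg (Nat.cast_nonneg _) _)
            (fun T hT => Real.rpow_le_rpow (Nat.cast_nonneg _) ?_ (by positivity))
          exact_mod_cast hproj T hT
      _ = (((Qf.card : ℝ) + 1) ^ ((k:ℝ)⁻¹)) ^ (n.choose t) := by
          rw [Finset.prod_const, hjscard]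
  have hbpos : (0:ℝ) < (Qf.card : ℝ) + 1 := by positivity
  have hapos : (0:ℝ) < (A.card : ℝ) := by
    rw [hcardA]; positivity
  have hlog : Real.log (A.card : ℝ) ≤
      (n.choose t : ℝ) * ((k:ℝ)⁻¹ * Real.log ((Qf.card : ℝ) + 1)) := by
    have h1 := Real.log_le_log hapos hstep
    rwa [Real.log_pow, Real.log_rpow hbpos] at h1
  have hdpos : (0:ℝ) < (((n-t).choose (r-t) : ℕ) : ℝ) := by
    exact_mod_cast Nat.choose_pos (by omega : r - t ≤ n - t)
  have hkpos : (0:ℝ) < (k : ℝ) := by exact_mod_cast hk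
  have hratio : (n.choose t : ℝ) * ((k:ℝ))⁻¹ =
      (n.choose r : ℝ) / (((n-t).choose (r-t) : ℕ) : ℝ) := by
    have hcm : n.choose r * r.choose t = n.choose t * (n-t).choose (r-t) :=
      Nat.choose_mul htr
    rw [hkdef]
    field_simp
    have hcm2 : n.choose t * (n - t).choose (r - t) = n.choose r * r.choose t := hcm.symm
    rw [← Nat.cast_mul, hcm2, Nat.cast_mul, mul_div_cancel_right₀ _ (Nat.cast_ne_zero.mpr (Nat.choose_pos htr).ne')]
  rw [hmP, hmQ]
  have hAeq : ((A.card : ℝ)) = (Pf.card : ℝ) + 1 := by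
    rw [hcardA]; push_cast; ring
  calc Real.log ((Pf.card : ℝ) + 1) = Real.log (A.card : ℝ) := by rw [hAeq]
    _ ≤ (n.choose t : ℝ) * ((k:ℝ)⁻¹ * Real.log ((Qf.card : ℝ) + 1)) := hlog
    _ = ((n.choose t : ℝ) * ((k:ℝ))⁻¹) * Real.log ((Qf.card : ℝ) + 1) := by ring
    _ = _ := by rw [hratio]
end
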